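/- arXiv:2506.17884 — 3 statements merged into one kernel-verified Lean document; each statement's English description precedes it below -/
import Mathlib

section
/- Under Assumption A1 and the threshold condition (T) on the penalty parameters, the optimal solution sets of (P0) and (P1) coincide: S₀ = S₁, i.e. the set of global minimizers of F over F₀ equals the set of global minimizers of Θ over ℝ^{N̄}. -/
open Filter Topology

noncomputable section

section General

variable {E F : Type*} [NormedAddCommGroup E] [NormedSpace ℝ E]
  [NormedAddCommGroup F] [NormedSpace ℝ F]

/-- `f` has directional derivative `y` at `x` along direction `d`. -/
def HasDirDeriv (f : E → F) (x d : E) (y : F) : Prop :=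
  Tendsto (fun τ : ℝ => τ⁻¹ • (f (x + τ • d) - f x)) (𝓝[>] 0) (𝓝 y)

/-- `f` has first- and second-order directional derivatives `y₁`, `y₂` at `x` along `d`. -/
def HasDirDeriv2 (f : E → F) (x d : E) (y₁ y₂ : F) : Prop :=
  HasDirDeriv f x d y₁ ∧
    Tendsto (fun τ : ℝ => (τ ^ 2 / 2)⁻¹ • (f (x + τ • d) - f x - τ • y₁)) (𝓝[>] 0) (𝓝 y₂)

open Classical in
def dirD (f : E → F) (x d : E) : F :=
  if h : ∃ y, HasDirDeriv f x d y then h.choose else 0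

open Classical in
def dirD2 (f : E → F) (x d : E) : F :=
  if h : ∃ y, Tendsto
      (fun τ : ℝ => (τ ^ 2 / 2)⁻¹ • (f (x + τ • d) - f x - τ • dirD f x d)) (𝓝[>] 0) (𝓝 y)
  then h.choose else 0

/-- The (Bouligand) tangent cone of `s` at `x`. -/
def tangentCone (s : Set E) (x : E) : Set E :=
  {d | ∃ (z : ℕ → E) (τ : ℕ → ℝ), (∀ k, z k ∈ s) ∧ Tendsto z atTop (𝓝 x) ∧
    (∀ k, 0 < τ k) ∧ Tendsto τ atTop (𝓝 0) ∧
    Tendsto (fun k => (τ k)⁻¹ • (z k - x)) atTop (𝓝 d)}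

/-- The radial cone of `s` at `x`. -/
def radialCone (s : Set E) (x : E) : Set E :=
  {d | ∃ τ : ℕ → ℝ, (∀ k, 0 < τ k) ∧ Tendsto τ atTop (𝓝 0) ∧ ∀ k, x + τ k • d ∈ s}

/-- `f` is twice semidifferentiable (in the sense of Rockafellar-Wets / Cui-Pang). -/
def TwiceSemidiff (f : E → ℝ) : Prop :=
  ∀ x d : E, ∃ y₁ y₂ : ℝ,
    Tendsto (fun p : ℝ × E => (f (x + p.1 • p.2) - f x) / p.1)
      ((𝓝[>] 0) ×ˢ 𝓝 d) (𝓝 y₁) ∧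
    Tendsto (fun p : ℝ × E => (f (x + p.1 • p.2) - f x - p.1 * dirD f x p.2) / (p.1 ^ 2 / 2))
      ((𝓝[>] 0) ×ˢ 𝓝 d) (𝓝 y₂)

end General
section Multi

/-- The parameter space `ℝⁿ`. -/
abbrev TSp (n : ℕ) : Type := EuclideanSpace ℝ (Fin n)

/-- The space of auxiliary variables `u = (u₁, …, u_L)`. -/
abbrev USp (L : ℕ) (N : Fin L → ℕ) : Type := EuclideanSpace ℝ (Σ ℓ : Fin L, Fin (N ℓ))

/-- The full variable space `z = (θ, u)` with Euclidean norm. -/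
abbrev ZSp (n L : ℕ) (N : Fin L → ℕ) : Type :=
  EuclideanSpace ℝ (Fin n ⊕ Σ ℓ : Fin L, Fin (N ℓ))

variable {n L : ℕ} {N : Fin L → ℕ}

/-- The `θ`-block of `z`. -/
def thOf (z : ZSp n L N) : TSp n := WithLp.toLp 2 (fun i => z (Sum.inl i))

/-- The `u`-block of `z`. -/
def uOf (z : ZSp n L N) : USp L N := WithLp.toLp 2 (fun j => z (Sum.inr j))

/-- The block `u_ℓ` of `z`. -/
def uBlk (z : ZSp n L N) (ℓ : Fin L) : EuclideanSpace ℝ (Fin (N ℓ)) :=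
  WithLp.toLp 2 (fun i => z (Sum.inr ⟨ℓ, i⟩))

/-- The truncation `(u₁, …, u_{ℓ-1}, 0, …, 0)` of the `u`-block of `z`. -/
def uLow (z : ZSp n L N) (ℓ : Fin L) : USp L N :=
  WithLp.toLp 2 (fun j => if j.1 < ℓ then z (Sum.inr j) else 0)

/-- `ψ ℓ` only depends on `θ` and the blocks `u_j` with `j < ℓ`; this encodes that
`ψ_{ℓ-1}` is a function of `(θ, u₁, …, u_{ℓ-1})`. -/
def DepBelow (ψ : (ℓ : Fin L) → ZSp n L N → EuclideanSpace ℝ (Fin (N ℓ))) : Prop :=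
  ∀ ℓ : Fin L, ∀ z z' : ZSp n L N, thOf z = thOf z' →
    (∀ j : Fin L, j < ℓ → uBlk z j = uBlk z' j) → ψ ℓ z = ψ ℓ z'

/-- The feasible set `F₀ = {z : u_ℓ = ψ_{ℓ-1}(θ, u₁, …, u_{ℓ-1})}`. -/
def Feas (ψ : (ℓ : Fin L) → ZSp n L N → EuclideanSpace ℝ (Fin (N ℓ))) : Set (ZSp n L N) :=
  {z | ∀ ℓ, uBlk z ℓ = ψ ℓ z}

/-- The objective `F(z) = g(u) + λ‖θ‖²` of problem (P0). -/
def Fobj (g : USp L N → ℝ) (lam : ℝ) (z : ZSp n L N) : ℝ :=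
  g (uOf z) + lam * ‖thOf z‖ ^ 2

/-- The objective `Θ(z) = F(z) + Σ_ℓ β_ℓ ‖u_ℓ − ψ_{ℓ-1}(θ, u₁, …, u_{ℓ-1})‖₁`
of the penalty problem (P1). -/
def Th (g : USp L N → ℝ) (lam : ℝ)
    (ψ : (ℓ : Fin L) → ZSp n L N → EuclideanSpace ℝ (Fin (N ℓ))) (β : Fin L → ℝ)
    (z : ZSp n L N) : ℝ :=
  Fobj g lam z + ∑ ℓ, β ℓ * ∑ i, |uBlk z ℓ i - ψ ℓ z i|

/-- The `ε`-enlargement `{z : Θ(z) ≤ γ} + ε·B(0,1)` of a level set of `Θ`. -/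
def LevE (g : USp L N → ℝ) (lam : ℝ)
    (ψ : (ℓ : Fin L) → ZSp n L N → EuclideanSpace ℝ (Fin (N ℓ))) (β : Fin L → ℝ)
    (γ ε : ℝ) : Set (ZSp n L N) :=
  {w | ∃ v : ZSp n L N, Th g lam ψ β v ≤ γ ∧ ‖w - v‖ ≤ ε}

end Multi


section EPAux

open Finset

variable {n L : ℕ} {N : Fin L → ℕ}

namespace EP

lemma norm_le_sum_abs {ι : Type*} [Fintype ι] (x : EuclideanSpace ℝ ι) : ‖x‖ ≤ ∑ i, |x i| := by
  rw [EuclideanSpace.norm_eq]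
  have h : ∀ i : ι, ‖x i‖ = |x i| := fun i => rfl
  calc Real.sqrt (∑ i, ‖x i‖^2) ≤ Real.sqrt ((∑ i, |x i|)^2) := by
        apply Real.sqrt_le_sqrt
        simp_rw [h]
        exact Finset.sum_sq_le_sq_sum_of_nonneg (fun i _ => abs_nonneg _)
    _ = ∑ i, |x i| := Real.sqrt_sq (Finset.sum_nonneg fun i _ => abs_nonneg _)

def blkU (x : USp L N) (ℓ : Fin L) : EuclideanSpace ℝ (Fin (N ℓ)) := WithLp.toLp 2 (fun i => x ⟨ℓ, i⟩)

lemma normU_le_sum_blk (x : USp L N) : ‖x‖ ≤ ∑ ℓ, ‖blkU x ℓ‖ := by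
  rw [EuclideanSpace.norm_eq, ← Finset.univ_sigma_univ, Finset.sum_sigma]
  have key : ∀ ℓ : Fin L, ∑ i : Fin (N ℓ), ‖x ⟨ℓ,i⟩‖^2 = ‖blkU x ℓ‖^2 := by
    intro ℓ
    rw [EuclideanSpace.norm_eq, Real.sq_sqrt (Finset.sum_nonneg fun i _ => sq_nonneg _)]
    rfl
  simp_rw [key]
  calc Real.sqrt (∑ ℓ, ‖blkU x ℓ‖^2) ≤ Real.sqrt ((∑ ℓ, ‖blkU x ℓ‖)^2) := by
        apply Real.sqrt_le_sqrt
        exact Finset.sum_sq_le_sq_sum_of_nonneg (fun i _ => norm_nonneg _)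
    _ = _ := Real.sqrt_sq (Finset.sum_nonneg fun i _ => norm_nonneg _)

def setBlk (w : ZSp n L N) (m : Fin L) (v : EuclideanSpace ℝ (Fin (N m))) : ZSp n L N :=
  WithLp.toLp 2 (fun (j : Fin n ⊕ Σ ℓ : Fin L, Fin (N ℓ)) => match j with
  | Sum.inl i => w (Sum.inl i)
  | Sum.inr ⟨ℓ, i⟩ => if h : ℓ = m then v (Fin.cast (congrArg N h) i) else w (Sum.inr ⟨ℓ, i⟩))

@[simp] lemma thOf_setBlk (w : ZSp n L N) (m : Fin L) (v : EuclideanSpace ℝ (Fin (N m))) :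
    thOf (setBlk w m v) = thOf w := rfl

lemma uBlk_setBlk_self (w : ZSp n L N) (m : Fin L) (v : EuclideanSpace ℝ (Fin (N m))) :
    uBlk (setBlk w m v) m = v := by ext i; simp [uBlk, setBlk]

lemma uBlk_setBlk_of_ne (w : ZSp n L N) {m ℓ : Fin L} (h : ℓ ≠ m)
    (v : EuclideanSpace ℝ (Fin (N m))) : uBlk (setBlk w m v) ℓ = uBlk w ℓ := by
  ext i; simp [uBlk, setBlk, h]

lemma setBlk_uBlk (w : ZSp n L N) (m : Fin L) : setBlk w m (uBlk w m) = w := by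
  ext j
  rcases j with i | ⟨ℓ, i⟩
  · rfl
  · by_cases h : ℓ = m
    · subst h; simp [setBlk, uBlk]
    · simp [setBlk, h]

variable (ψ : (ℓ : Fin L) → ZSp n L N → EuclideanSpace ℝ (Fin (N ℓ)))

noncomputable def homSeq (z : ZSp n L N) (s : ℝ) (m : ℕ) : ZSp n L N :=
  Nat.rec z (fun m w =>
    if h : m < L then
      setBlk w ⟨m, h⟩ (ψ ⟨m, h⟩ w + s • (uBlk z ⟨m, h⟩ - ψ ⟨m, h⟩ z))
    else w) m

@[simp] lemma homSeq_zero (z : ZSp n L N) (s : ℝ) : homSeq ψ z s 0 = z := rfl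

lemma homSeq_succ (z : ZSp n L N) (s : ℝ) (m : ℕ) :
    homSeq ψ z s (m + 1) =
      if h : m < L then
        setBlk (homSeq ψ z s m) ⟨m, h⟩
          (ψ ⟨m, h⟩ (homSeq ψ z s m) + s • (uBlk z ⟨m, h⟩ - ψ ⟨m, h⟩ z))
      else homSeq ψ z s m := rfl

lemma thOf_homSeq (z : ZSp n L N) (s : ℝ) (m : ℕ) : thOf (homSeq ψ z s m) = thOf z := by
  induction m with
  | zero => rfl
  | succ m ih =>
    rw [homSeq_succ]
    split
    · rw [thOf_setBlk, ih]
    · exact ih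

lemma uBlk_homSeq_of_le (z : ZSp n L N) (s : ℝ) {m : ℕ} {ℓ : Fin L} (h : m ≤ ℓ.val) :
    uBlk (homSeq ψ z s m) ℓ = uBlk z ℓ := by
  induction m with
  | zero => rfl
  | succ m ih =>
    rw [homSeq_succ]
    have hmL : m < L := lt_of_lt_of_le (Nat.lt_of_succ_le h) ℓ.2.le
    rw [dif_pos hmL,
      uBlk_setBlk_of_ne _ (by intro he; have := congrArg Fin.val he; simp at this; omega),
      ih (by omega)]

lemma uBlk_homSeq_stable (z : ZSp n L N) (s : ℝ) {m : ℕ} {ℓ : Fin L} (h : ℓ.val < m) :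
    uBlk (homSeq ψ z s m) ℓ = uBlk (homSeq ψ z s (ℓ.val + 1)) ℓ := by
  induction m with
  | zero => omega
  | succ m ih =>
    rcases Nat.lt_or_ge ℓ.val m with hlt | hge
    · rw [homSeq_succ]
      split
      · rw [uBlk_setBlk_of_ne _ (by intro he; have := congrArg Fin.val he; simp at this; omega),
          ih hlt]
      · exact ih hlt
    · have : ℓ.val = m := by omega
      subst this
      rfl

lemma psi_homSeq (hdep : DepBelow ψ) (z : ZSp n L N) (s : ℝ) {m : ℕ} {ℓ : Fin L}
    (h : ℓ.val ≤ m) : ψ ℓ (homSeq ψ z s m) = ψ ℓ (homSeq ψ z s ℓ.val) := by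
  apply hdep
  · rw [thOf_homSeq, thOf_homSeq]
  · intro j hj
    have hj' : j.val < ℓ.val := hj
    rw [uBlk_homSeq_stable ψ z s (lt_of_lt_of_le hj' h), uBlk_homSeq_stable ψ z s hj']

lemma uBlk_homSeq_res (hdep : DepBelow ψ) (z : ZSp n L N) (s : ℝ) {m : ℕ} {ℓ : Fin L}
    (h : ℓ.val < m) :
    uBlk (homSeq ψ z s m) ℓ = ψ ℓ (homSeq ψ z s m) + s • (uBlk z ℓ - ψ ℓ z) := by
  rw [uBlk_homSeq_stable ψ z s h, psi_homSeq ψ hdep z s (le_of_lt h)]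
  have hL : ℓ.val < L := ℓ.2
  have hstep : homSeq ψ z s (ℓ.val + 1)
      = setBlk (homSeq ψ z s ℓ.val) ⟨ℓ.val, hL⟩
        (ψ ⟨ℓ.val, hL⟩ (homSeq ψ z s ℓ.val) + s • (uBlk z ⟨ℓ.val, hL⟩ - ψ ⟨ℓ.val, hL⟩ z)) := by
    rw [homSeq_succ, dif_pos hL]
  rw [hstep]
  have heta : (⟨ℓ.val, hL⟩ : Fin L) = ℓ := rfl
  rw [heta, uBlk_setBlk_self]

lemma homSeq_one (z : ZSp n L N) (m : ℕ) : homSeq ψ z 1 m = z := by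
  induction m with
  | zero => rfl
  | succ m ih =>
    rw [homSeq_succ]
    split
    · rw [ih, one_smul, add_sub_cancel, setBlk_uBlk]
    · exact ih

lemma homSeq_zero_feas (hdep : DepBelow ψ) (z : ZSp n L N) : homSeq ψ z 0 L ∈ Feas ψ := by
  intro ℓ
  rw [uBlk_homSeq_res ψ hdep z 0 ℓ.2, zero_smul, add_zero]

lemma continuous_setBlk (m : Fin L) :
    Continuous (fun p : ZSp n L N × EuclideanSpace ℝ (Fin (N m)) => setBlk p.1 m p.2) := by
  apply (PiLp.continuous_toLp (p := 2) (β := fun _ => ℝ)).comp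
  apply continuous_pi
  intro j
  rcases j with i | ⟨ℓ, i⟩
  · exact (PiLp.continuous_apply (p := 2) (β := fun _ => ℝ) (Sum.inl i : Fin n ⊕ Σ ℓ : Fin L, Fin (N ℓ))).comp continuous_fst
  · show Continuous fun p : ZSp n L N × EuclideanSpace ℝ (Fin (N m)) =>
      if h : ℓ = m then p.2 (Fin.cast (congrArg N h) i) else p.1 (Sum.inr ⟨ℓ, i⟩)
    by_cases h : ℓ = m
    · simp only [dif_pos h]
      exact (PiLp.continuous_apply (p := 2) (β := fun _ => ℝ) _).comp continuous_snd
    · simp only [dif_neg h]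
      exact (PiLp.continuous_apply (p := 2) (β := fun _ => ℝ) _).comp continuous_fst

lemma continuous_homSeq (hψc : ∀ ℓ, Continuous (ψ ℓ)) (z : ZSp n L N) (m : ℕ) :
    Continuous fun s : ℝ => homSeq ψ z s m := by
  induction m with
  | zero => exact continuous_const
  | succ m ih =>
    simp only [homSeq_succ]
    by_cases h : m < L
    · simp only [dif_pos h]
      exact (continuous_setBlk _).comp
        (ih.prodMk (((hψc _).comp ih).add (continuous_id.smul continuous_const)))
    · simpa only [dif_neg h] using ih

lemma continuous_thOf : Continuous (thOf : ZSp n L N → TSp n) :=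
  (PiLp.continuous_toLp (p := 2) (β := fun _ => ℝ)).comp
    (continuous_pi fun _ => PiLp.continuous_apply (p := 2) (β := fun _ => ℝ) _)

lemma continuous_uOf : Continuous (uOf : ZSp n L N → USp L N) :=
  (PiLp.continuous_toLp (p := 2) (β := fun _ => ℝ)).comp
    (continuous_pi fun _ => PiLp.continuous_apply (p := 2) (β := fun _ => ℝ) _)

lemma continuous_uBlk (ℓ : Fin L) : Continuous (fun z : ZSp n L N => uBlk z ℓ) :=
  (PiLp.continuous_toLp (p := 2) (β := fun _ => ℝ)).comp
    (continuous_pi fun _ => PiLp.continuous_apply (p := 2) (β := fun _ => ℝ) _)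

lemma continuous_Th (g : USp L N → ℝ) (lam : ℝ)
    (ψ : (ℓ : Fin L) → ZSp n L N → EuclideanSpace ℝ (Fin (N ℓ))) (β : Fin L → ℝ)
    (hgc : Continuous g) (hψc : ∀ ℓ, Continuous (ψ ℓ)) :
    Continuous (Th g lam ψ β) := by
  unfold Th Fobj
  refine Continuous.add (Continuous.add (hgc.comp continuous_uOf)
    (continuous_const.mul ((continuous_thOf.norm).pow 2))) ?_
  refine continuous_finset_sum _ fun ℓ _ => continuous_const.mul ?_
  refine continuous_finset_sum _ fun i _ => Continuous.abs ?_
  exact ((PiLp.continuous_apply (p := 2) (β := fun _ => ℝ) i).comp (continuous_uBlk ℓ)).sub ((PiLp.continuous_apply (p := 2) (β := fun _ => ℝ) i).comp (hψc ℓ))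

lemma norm_uLow_sub_le (w w' : ZSp n L N) (ℓ : Fin L) :
    ‖uLow w ℓ - uLow w' ℓ‖ ≤ ∑ j : Fin L, if j < ℓ then ‖uBlk w j - uBlk w' j‖ else 0 := by
  refine (normU_le_sum_blk _).trans (le_of_eq (Finset.sum_congr rfl fun j _ => ?_))
  by_cases hj : j < ℓ
  · rw [if_pos hj]
    congr 1
    ext i
    simp [blkU, uLow, uBlk, hj]
  · rw [if_neg hj]
    have hz : blkU (uLow w ℓ - uLow w' ℓ) j = 0 := by
      ext i
      simp [blkU, uLow, uBlk, hj]
    rw [hz, norm_zero]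

lemma Th_eq_Fobj_of_feas (g : USp L N → ℝ) (lam : ℝ)
    (ψ : (ℓ : Fin L) → ZSp n L N → EuclideanSpace ℝ (Fin (N ℓ))) (β : Fin L → ℝ)
    {z : ZSp n L N} (h : z ∈ Feas ψ) : Th g lam ψ β z = Fobj g lam z := by
  rw [Th]
  have hz : ∀ ℓ : Fin L, ∑ i, |uBlk z ℓ i - ψ ℓ z i| = 0 := fun ℓ =>
    Finset.sum_eq_zero fun i _ => by
      rw [show uBlk z ℓ i = ψ ℓ z i from congrArg (fun v => v i) (h ℓ), sub_self, abs_zero]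
  rw [Finset.sum_eq_zero fun ℓ _ => by rw [hz ℓ, mul_zero], add_zero]

lemma mem_LevE_self (g : USp L N → ℝ) (lam : ℝ)
    (ψ : (ℓ : Fin L) → ZSp n L N → EuclideanSpace ℝ (Fin (N ℓ))) (β : Fin L → ℝ)
    {γ ε : ℝ} (hε : 0 ≤ ε) {v : ZSp n L N} (h : Th g lam ψ β v ≤ γ) :
    v ∈ LevE g lam ψ β γ ε := ⟨v, h, by simp [hε]⟩

lemma keyEst
    (lam : ℝ) (β : Fin L → ℝ) (g : USp L N → ℝ)
    (hdep : DepBelow ψ)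
    (Kg : ℝ) (hKg : 0 ≤ Kg) (K : ℕ → ℝ) (hKpos : ∀ p, 1 ≤ p → p < L → 0 < K p)
    (γ ε : ℝ)
    (hLipg : ∀ w w' : ZSp n L N, w ∈ LevE g lam ψ β γ ε →
      w' ∈ LevE g lam ψ β γ ε → thOf w = thOf w' →
      |g (uOf w) - g (uOf w')| ≤ Kg * ‖uOf w - uOf w'‖)
    (hLipψ : ∀ ℓ : Fin L, 1 ≤ (ℓ : ℕ) → ∀ w w' : ZSp n L N,
      w ∈ LevE g lam ψ β γ ε → w' ∈ LevE g lam ψ β γ ε → thOf w = thOf w' →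
      ‖ψ ℓ w - ψ ℓ w'‖ ≤ K (ℓ : ℕ) * ‖uLow w ℓ - uLow w' ℓ‖)
    (z : ZSp n L N) (s : ℝ) (hs0 : 0 ≤ s) (hs1 : s ≤ 1)
    (hzmem : z ∈ LevE g lam ψ β γ ε) (hZmem : homSeq ψ z s L ∈ LevE g lam ψ β γ ε) :
    Th g lam ψ β (homSeq ψ z s L) ≤ Th g lam ψ β z
      - (1 - s) * ((∑ ℓ, β ℓ * ∑ i, |uBlk z ℓ i - ψ ℓ z i|)
          - Kg * ∑ ℓ, ‖uBlk z ℓ - ψ ℓ z‖ * ∏ p ∈ Finset.Ico ((ℓ:ℕ)+1) L, (1 + K p)) := by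
  set Z := homSeq ψ z s L with hZdef
  have hth : thOf Z = thOf z := thOf_homSeq ψ z s L
  have hres : ∀ ℓ : Fin L, uBlk Z ℓ = ψ ℓ Z + s • (uBlk z ℓ - ψ ℓ z) :=
    fun ℓ => uBlk_homSeq_res ψ hdep z s ℓ.2
  have hrescoord : ∀ (ℓ : Fin L) (i : Fin (N ℓ)),
      uBlk Z ℓ i - ψ ℓ Z i = s * (uBlk z ℓ i - ψ ℓ z i) := by
    intro ℓ i
    have h1 := congrArg (fun v => v i) (hres ℓ)
    simp only [PiLp.add_apply, PiLp.smul_apply, PiLp.sub_apply, smul_eq_mul] at h1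
    rw [h1]
    ring
  have hpen : ∀ ℓ : Fin L, ∑ i, |uBlk Z ℓ i - ψ ℓ Z i| = s * ∑ i, |uBlk z ℓ i - ψ ℓ z i| := by
    intro ℓ
    rw [Finset.mul_sum]
    exact Finset.sum_congr rfl fun i _ => by rw [hrescoord ℓ i, abs_mul, abs_of_nonneg hs0]
  -- block-difference quantities, indexed by ℕ
  set D' : ℕ → ℝ := fun j => if h : j < L then ‖uBlk Z ⟨j, h⟩ - uBlk z ⟨j, h⟩‖ else 0 with hD'def
  set R2' : ℕ → ℝ := fun j => if h : j < L then ‖uBlk z ⟨j, h⟩ - ψ ⟨j, h⟩ z‖ else 0 with hR2'def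
  have hD'eq : ∀ ℓ : Fin L, D' ℓ.val = ‖uBlk Z ℓ - uBlk z ℓ‖ := by
    intro ℓ
    rw [hD'def]
    simp only [dif_pos ℓ.isLt, Fin.eta]
  have hR2'eq : ∀ ℓ : Fin L, R2' ℓ.val = ‖uBlk z ℓ - ψ ℓ z‖ := by
    intro ℓ
    rw [hR2'def]
    simp only [dif_pos ℓ.isLt, Fin.eta]
  have hlow : ∀ ℓ : Fin L, ‖uLow Z ℓ - uLow z ℓ‖ ≤ ∑ j ∈ Finset.range ℓ.val, D' j := by
    intro ℓ
    refine (norm_uLow_sub_le Z z ℓ).trans (le_of_eq ?_)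
    have h2 : ∑ j : Fin L, (if j < ℓ then ‖uBlk Z j - uBlk z j‖ else 0)
        = ∑ j ∈ Finset.range L, (if j < ℓ.val then D' j else 0) := by
      rw [← Fin.sum_univ_eq_sum_range (fun j => if j < ℓ.val then D' j else 0) L]
      refine Finset.sum_congr rfl fun j _ => ?_
      by_cases hj : j < ℓ
      · rw [if_pos hj, if_pos (by exact hj), hD'eq]
      · rw [if_neg hj]; exact (if_neg (show ¬((j:ℕ) < (ℓ:ℕ)) from fun hc => hj (Fin.lt_def.mpr hc))).symm
    rw [h2]
    calc ∑ j ∈ Finset.range L, (if j < ℓ.val then D' j else 0)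
        = ∑ j ∈ Finset.range ℓ.val, (if j < ℓ.val then D' j else 0) :=
          (Finset.sum_subset (Finset.range_subset_range.2 ℓ.isLt.le)
            (fun x _ hx => if_neg fun hc => hx (Finset.mem_range.2 hc))).symm
      _ = ∑ j ∈ Finset.range ℓ.val, D' j :=
          Finset.sum_congr rfl fun j hj => if_pos (Finset.mem_range.1 hj)
  have hDb : ∀ ℓ : Fin L,
      ‖uBlk Z ℓ - uBlk z ℓ‖ ≤ ‖ψ ℓ Z - ψ ℓ z‖ + (1 - s) * ‖uBlk z ℓ - ψ ℓ z‖ := by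
    intro ℓ
    have hrw : uBlk Z ℓ - uBlk z ℓ = (ψ ℓ Z - ψ ℓ z) - (1 - s) • (uBlk z ℓ - ψ ℓ z) := by
      rw [hres ℓ]
      module
    rw [hrw]
    refine (norm_sub_le _ _).trans ?_
    rw [norm_smul, Real.norm_eq_abs, abs_of_nonneg (by linarith : (0:ℝ) ≤ 1 - s)]
  have hψ0 : ∀ ℓ : Fin L, (ℓ : ℕ) = 0 → ψ ℓ Z = ψ ℓ z := by
    intro ℓ h0
    refine hdep ℓ Z z hth fun j hj => absurd (show (j:ℕ) < (ℓ:ℕ) from hj) (by omega)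
  have hψpos : ∀ ℓ : Fin L, 1 ≤ (ℓ:ℕ) →
      ‖ψ ℓ Z - ψ ℓ z‖ ≤ K ℓ.val * ∑ j ∈ Finset.range ℓ.val, D' j := by
    intro ℓ h1
    refine (hLipψ ℓ h1 Z z hZmem hzmem hth).trans ?_
    exact mul_le_mul_of_nonneg_left (hlow ℓ) (hKpos ℓ.val h1 ℓ.isLt).le
  set T : ℕ → ℝ :=
    fun m => ∑ j ∈ Finset.range m, R2' j * ∏ p ∈ Finset.Ico (j+1) m, (1 + K p) with hTdef
  have hT0 : T 0 = 0 := by simp [hTdef]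
  have hTrec : ∀ m, T (m+1) = (1 + K m) * T m + R2' m := by
    intro m
    rw [hTdef]
    simp only
    rw [Finset.sum_range_succ, Finset.Ico_self, Finset.prod_empty, mul_one]
    congr 1
    rw [Finset.mul_sum]
    refine Finset.sum_congr rfl fun j hj => ?_
    rw [Finset.prod_Ico_succ_top (Nat.succ_le_of_lt (Finset.mem_range.1 hj))]
    ring
  have hInd : ∀ m, m ≤ L → ∑ j ∈ Finset.range m, D' j ≤ (1 - s) * T m := by
    intro m
    induction m with
    | zero => intro _; simp [hT0]
    | succ m ih =>
      intro hm1
      have hmL : m < L := hm1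
      have hihm := ih (le_of_lt hmL)
      rw [Finset.sum_range_succ, hTrec m]
      have hD'm : D' m = ‖uBlk Z ⟨m, hmL⟩ - uBlk z ⟨m, hmL⟩‖ := hD'eq ⟨m, hmL⟩
      have hR2'm : R2' m = ‖uBlk z ⟨m, hmL⟩ - ψ ⟨m, hmL⟩ z‖ := hR2'eq ⟨m, hmL⟩
      rcases Nat.eq_zero_or_pos m with h0 | hpos
      · subst h0
        simp only [Finset.sum_range_zero, zero_add]
        have hb := hDb ⟨0, hmL⟩
        rw [hψ0 ⟨0, hmL⟩ rfl, sub_self, norm_zero, zero_add] at hb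
        rw [hD'm, hR2'm, hT0]
        nlinarith [hb, norm_nonneg (uBlk z ⟨0, hmL⟩ - ψ ⟨0, hmL⟩ z)]
      · have hb : D' m ≤ K m * ∑ j ∈ Finset.range m, D' j + (1-s) * R2' m := by
          rw [hD'm, hR2'm]
          have h1 := hDb ⟨m, hmL⟩
          have h2 := hψpos ⟨m, hmL⟩ hpos
          linarith
        have hKm : (0:ℝ) ≤ 1 + K m := by linarith [hKpos m hpos hmL]
        have hmul : (1 + K m) * (∑ j ∈ Finset.range m, D' j) ≤ (1 + K m) * ((1-s) * T m) :=
          mul_le_mul_of_nonneg_left hihm hKm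
        have hexp : (1 + K m) * (∑ j ∈ Finset.range m, D' j)
            = ∑ j ∈ Finset.range m, D' j + K m * ∑ j ∈ Finset.range m, D' j := by ring
        have hrr : (1 + K m) * ((1-s) * T m) = (1-s) * ((1 + K m) * T m) := by ring
        linarith
  have hgb : g (uOf Z) ≤ g (uOf z) + Kg * ((1 - s) * T L) := by
    have h1 := hLipg Z z hZmem hzmem hth
    have h2 : ‖uOf Z - uOf z‖ ≤ ∑ j ∈ Finset.range L, D' j := by
      refine (normU_le_sum_blk _).trans (le_of_eq ?_)
      have hblk : ∀ j : Fin L, ‖blkU (uOf Z - uOf z) j‖ = D' j.val := by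
        intro j
        rw [hD'eq]
        congr 1
      calc ∑ j : Fin L, ‖blkU (uOf Z - uOf z) j‖ = ∑ j : Fin L, D' j.val :=
            Finset.sum_congr rfl fun j _ => hblk j
        _ = ∑ j ∈ Finset.range L, D' j := Fin.sum_univ_eq_sum_range D' L
    have h3 := hInd L le_rfl
    have habs : g (uOf Z) - g (uOf z) ≤ Kg * ‖uOf Z - uOf z‖ := (le_abs_self _).trans h1
    have h4 : Kg * ‖uOf Z - uOf z‖ ≤ Kg * ((1-s) * T L) :=
      mul_le_mul_of_nonneg_left (h2.trans h3) hKg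
    linarith
  have hTL : T L = ∑ ℓ : Fin L, ‖uBlk z ℓ - ψ ℓ z‖ * ∏ p ∈ Finset.Ico ((ℓ:ℕ)+1) L, (1 + K p) := by
    rw [hTdef]
    simp only
    rw [← Fin.sum_univ_eq_sum_range (fun j => R2' j * ∏ p ∈ Finset.Ico (j+1) L, (1 + K p)) L]
    exact Finset.sum_congr rfl fun ℓ _ => by rw [hR2'eq]
  have hPZ : ∑ ℓ, β ℓ * ∑ i, |uBlk Z ℓ i - ψ ℓ Z i|
      = s * ∑ ℓ, β ℓ * ∑ i, |uBlk z ℓ i - ψ ℓ z i| := by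
    rw [Finset.mul_sum]
    exact Finset.sum_congr rfl fun ℓ _ => by rw [hpen ℓ]; ring
  have hThZ : Th g lam ψ β Z
      = g (uOf Z) + lam * ‖thOf z‖^2 + s * ∑ ℓ, β ℓ * ∑ i, |uBlk z ℓ i - ψ ℓ z i| := by
    rw [Th, Fobj, hth, hPZ]
  have hThz : Th g lam ψ β z
      = g (uOf z) + lam * ‖thOf z‖^2 + ∑ ℓ, β ℓ * ∑ i, |uBlk z ℓ i - ψ ℓ z i| := by
    rw [Th, Fobj]
  rw [hThZ, hThz, ← hTL]
  nlinarith [hgb]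

lemma gap_bounds
    (β : Fin L → ℝ) (hβ : ∀ ℓ, 0 < β ℓ)
    (Kg : ℝ) (K : ℕ → ℝ)
    (hT : ∀ ℓ : Fin L, Kg * ∏ p ∈ Finset.Ico ((ℓ:ℕ)+1) L, (1 + K p) < β ℓ)
    (z : ZSp n L N) :
    Kg * (∑ ℓ, ‖uBlk z ℓ - ψ ℓ z‖ * ∏ p ∈ Finset.Ico ((ℓ:ℕ)+1) L, (1 + K p))
      ≤ ∑ ℓ, β ℓ * ∑ i, |uBlk z ℓ i - ψ ℓ z i| ∧
    ((∃ ℓ, uBlk z ℓ ≠ ψ ℓ z) →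
      Kg * (∑ ℓ, ‖uBlk z ℓ - ψ ℓ z‖ * ∏ p ∈ Finset.Ico ((ℓ:ℕ)+1) L, (1 + K p))
        < ∑ ℓ, β ℓ * ∑ i, |uBlk z ℓ i - ψ ℓ z i|) := by
  have hR21 : ∀ ℓ : Fin L, ‖uBlk z ℓ - ψ ℓ z‖ ≤ ∑ i, |uBlk z ℓ i - ψ ℓ z i| := by
    intro ℓ
    refine (norm_le_sum_abs _).trans (le_of_eq (Finset.sum_congr rfl fun i _ => ?_))
    congr 1
  have hterm : ∀ ℓ : Fin L,
      Kg * (‖uBlk z ℓ - ψ ℓ z‖ * ∏ p ∈ Finset.Ico ((ℓ:ℕ)+1) L, (1 + K p))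
        ≤ β ℓ * ∑ i, |uBlk z ℓ i - ψ ℓ z i| := by
    intro ℓ
    calc Kg * (‖uBlk z ℓ - ψ ℓ z‖ * ∏ p ∈ Finset.Ico ((ℓ:ℕ)+1) L, (1 + K p))
        = (Kg * ∏ p ∈ Finset.Ico ((ℓ:ℕ)+1) L, (1 + K p)) * ‖uBlk z ℓ - ψ ℓ z‖ := by ring
      _ ≤ β ℓ * ‖uBlk z ℓ - ψ ℓ z‖ :=
          mul_le_mul_of_nonneg_right (hT ℓ).le (norm_nonneg _)
      _ ≤ β ℓ * ∑ i, |uBlk z ℓ i - ψ ℓ z i| :=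
          mul_le_mul_of_nonneg_left (hR21 ℓ) (hβ ℓ).le
  constructor
  · rw [Finset.mul_sum]
    exact Finset.sum_le_sum fun ℓ _ => hterm ℓ
  · rintro ⟨ℓ0, hℓ0⟩
    rw [Finset.mul_sum]
    refine Finset.sum_lt_sum (fun ℓ _ => hterm ℓ) ⟨ℓ0, Finset.mem_univ _, ?_⟩
    have hpos : 0 < ‖uBlk z ℓ0 - ψ ℓ0 z‖ := by
      rw [norm_pos_iff]
      exact sub_ne_zero.2 hℓ0
    calc Kg * (‖uBlk z ℓ0 - ψ ℓ0 z‖ * ∏ p ∈ Finset.Ico ((ℓ0:ℕ)+1) L, (1 + K p))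
        = (Kg * ∏ p ∈ Finset.Ico ((ℓ0:ℕ)+1) L, (1 + K p)) * ‖uBlk z ℓ0 - ψ ℓ0 z‖ := by ring
      _ < β ℓ0 * ‖uBlk z ℓ0 - ψ ℓ0 z‖ := mul_lt_mul_of_pos_right (hT ℓ0) hpos
      _ ≤ β ℓ0 * ∑ i, |uBlk z ℓ0 i - ψ ℓ0 z i| :=
          mul_le_mul_of_nonneg_left (hR21 ℓ0) (hβ ℓ0).le

lemma exact_pen
    (lam : ℝ) (β : Fin L → ℝ) (hβ : ∀ ℓ, 0 < β ℓ) (g : USp L N → ℝ)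
    (hdep : DepBelow ψ)
    (hgc : Continuous g) (hψc : ∀ ℓ, Continuous (ψ ℓ))
    (Kg : ℝ) (hKg : 0 ≤ Kg) (K : ℕ → ℝ) (hKpos : ∀ p, 1 ≤ p → p < L → 0 < K p)
    (γ ε : ℝ) (hε : 0 < ε)
    (hLipg : ∀ w w' : ZSp n L N, w ∈ LevE g lam ψ β γ ε →
      w' ∈ LevE g lam ψ β γ ε → thOf w = thOf w' →
      |g (uOf w) - g (uOf w')| ≤ Kg * ‖uOf w - uOf w'‖)
    (hLipψ : ∀ ℓ : Fin L, 1 ≤ (ℓ : ℕ) → ∀ w w' : ZSp n L N,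
      w ∈ LevE g lam ψ β γ ε → w' ∈ LevE g lam ψ β γ ε → thOf w = thOf w' →
      ‖ψ ℓ w - ψ ℓ w'‖ ≤ K (ℓ : ℕ) * ‖uLow w ℓ - uLow w' ℓ‖)
    (hT : ∀ ℓ : Fin L, Kg * ∏ p ∈ Finset.Ico ((ℓ:ℕ)+1) L, (1 + K p) < β ℓ)
    (z : ZSp n L N) (hz : Th g lam ψ β z ≤ γ) :
    ∃ w, w ∈ Feas ψ ∧ Fobj g lam w ≤ Th g lam ψ β z ∧
      (z ∉ Feas ψ → Fobj g lam w < Th g lam ψ β z) := by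
  set gap : ℝ := (∑ ℓ, β ℓ * ∑ i, |uBlk z ℓ i - ψ ℓ z i|)
      - Kg * ∑ ℓ, ‖uBlk z ℓ - ψ ℓ z‖ * ∏ p ∈ Finset.Ico ((ℓ:ℕ)+1) L, (1 + K p) with hgapdef
  obtain ⟨hg1, hg2⟩ := gap_bounds ψ β hβ Kg K hT z
  have hgap0 : 0 ≤ gap := by rw [hgapdef]; linarith
  set Zf : ℝ → ZSp n L N := fun s => homSeq ψ z s L with hZfdef
  have hZc : Continuous Zf := continuous_homSeq ψ hψc z L
  have hZ1 : Zf 1 = z := homSeq_one ψ z L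
  set φ : ℝ → ℝ := fun s => Th g lam ψ β (Zf s) with hφdef
  have hφc : Continuous φ := (continuous_Th g lam ψ β hgc hψc).comp hZc
  have hφ1 : φ 1 = Th g lam ψ β z := by rw [hφdef]; simp only; rw [hZ1]
  have hzmem : z ∈ LevE g lam ψ β γ ε := mem_LevE_self g lam ψ β hε.le hz
  have hkey : ∀ s, 0 ≤ s → s ≤ 1 → Zf s ∈ LevE g lam ψ β γ ε →
      φ s ≤ Th g lam ψ β z - (1 - s) * gap := by
    intro s hs0 hs1 hmem
    exact keyEst ψ lam β g hdep Kg hKg K hKpos γ ε hLipg hLipψ z s hs0 hs1 hzmem hmem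
  set A : Set ℝ := {s | s ∈ Set.Icc (0:ℝ) 1 ∧ ∀ σ ∈ Set.Icc s 1, φ σ ≤ Th g lam ψ β z} with hAdef
  have h1A : (1:ℝ) ∈ A := by
    refine ⟨⟨zero_le_one, le_rfl⟩, fun σ hσ => ?_⟩
    have : σ = 1 := le_antisymm hσ.2 hσ.1
    rw [this, hφ1]
  have hne : A.Nonempty := ⟨1, h1A⟩
  have hbdd : BddBelow A := ⟨0, fun a ha => ha.1.1⟩
  set t : ℝ := sInf A with htdef
  have ht0 : 0 ≤ t := le_csInf hne fun a ha => ha.1.1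
  have ht1 : t ≤ 1 := csInf_le hbdd h1A
  have htgt : ∀ σ, t < σ → σ ≤ 1 → φ σ ≤ Th g lam ψ β z := by
    intro σ htσ hσ1
    obtain ⟨a, haA, haσ⟩ := exists_lt_of_csInf_lt hne htσ
    exact haA.2 σ ⟨haσ.le, hσ1⟩
  have htA : t ∈ A := by
    refine ⟨⟨ht0, ht1⟩, fun σ hσ => ?_⟩
    rcases eq_or_lt_of_le hσ.1 with heq | hlt
    · rcases eq_or_lt_of_le ht1 with ht1' | ht1'
      · rw [← heq, ht1', hφ1]
      · have hsub : Set.Ioc t 1 ⊆ {σ | φ σ ≤ Th g lam ψ β z} :=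
          fun x hx => htgt x hx.1 hx.2
        have hcl : IsClosed {σ | φ σ ≤ Th g lam ψ β z} :=
          isClosed_le hφc continuous_const
        have : t ∈ closure (Set.Ioc t 1) := by
          rw [closure_Ioc (ne_of_lt ht1')]
          exact ⟨le_rfl, ht1⟩
        rw [← heq]
        exact hcl.closure_subset_iff.2 hsub this
    · exact htgt σ hlt hσ.2
  have ht : t = 0 := by
    by_contra hne0
    have htpos : 0 < t := lt_of_le_of_ne ht0 (Ne.symm hne0)
    have hmemt : Zf t ∈ LevE g lam ψ β γ ε :=
      mem_LevE_self g lam ψ β hε.le (le_trans (htA.2 t ⟨le_rfl, ht1⟩) hz)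
    obtain ⟨δ, hδpos, hδ⟩ := Metric.continuousAt_iff.1 hZc.continuousAt ε hε
    set a : ℝ := max 0 (t - δ/2) with hadef
    have ha_lt : a < t := max_lt htpos (by linarith)
    have ha0 : 0 ≤ a := le_max_left _ _
    have haA : a ∈ A := by
      refine ⟨⟨ha0, le_trans ha_lt.le ht1⟩, fun σ hσ => ?_⟩
      rcases le_or_gt t σ with hts | hts
      · exact htA.2 σ ⟨hts, hσ.2⟩
      · have hσ0 : 0 ≤ σ := le_trans ha0 hσ.1
        have hσ1 : σ ≤ 1 := hσ.2
        have hdist : dist σ t < δ := by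
          rw [Real.dist_eq, abs_of_nonpos (by linarith)]
          have : t - δ/2 ≤ a := le_max_right _ _
          have : t - δ/2 ≤ σ := le_trans this hσ.1
          linarith
        have hball : dist (Zf σ) (Zf t) < ε := hδ hdist
        have hmemσ : Zf σ ∈ LevE g lam ψ β γ ε :=
          ⟨Zf t, le_trans (htA.2 t ⟨le_rfl, ht1⟩) hz, by
            rw [← dist_eq_norm]
            exact hball.le⟩
        have := hkey σ hσ0 hσ1 hmemσ
        nlinarith [mul_nonneg (by linarith : (0:ℝ) ≤ 1 - σ) hgap0]
    have := csInf_le hbdd haA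
    rw [← htdef] at this
    linarith
  have h0A : (0:ℝ) ∈ A := ht ▸ htA
  have hφ0le : φ 0 ≤ Th g lam ψ β z := h0A.2 0 ⟨le_rfl, zero_le_one⟩
  have hmem0 : Zf 0 ∈ LevE g lam ψ β γ ε :=
    mem_LevE_self g lam ψ β hε.le (le_trans hφ0le hz)
  have hkey0 := hkey 0 le_rfl zero_le_one hmem0
  rw [sub_zero, one_mul] at hkey0
  have hfeas0 : Zf 0 ∈ Feas ψ := homSeq_zero_feas ψ hdep z
  refine ⟨Zf 0, hfeas0, ?_, ?_⟩
  · rw [← Th_eq_Fobj_of_feas g lam ψ β hfeas0]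
    linarith
  · intro hnF
    have hex : ∃ ℓ, uBlk z ℓ ≠ ψ ℓ z := by
      by_contra hc
      push_neg at hc
      exact hnF fun ℓ => hc ℓ
    have := hg2 hex
    rw [← Th_eq_Fobj_of_feas g lam ψ β hfeas0]
    have hgappos : 0 < gap := by rw [hgapdef]; linarith
    linarith

end EP

end EPAux

/-- Theorem 3.2(a): under Assumption A1 and the threshold condition (T), `S₀ = S₁`. -/
theorem stmt11
    {n L : ℕ} (hn : 0 < n) (hL : 0 < L) {N : Fin L → ℕ} (hN : ∀ ℓ, 0 < N ℓ)
    (lam : ℝ) (hlam : 0 < lam) (β : Fin L → ℝ) (hβ : ∀ ℓ, 0 < β ℓ)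
    (g : USp L N → ℝ) (hg0 : ∀ u, 0 ≤ g u)
    (ψ : (ℓ : Fin L) → ZSp n L N → EuclideanSpace ℝ (Fin (N ℓ)))
    (hdep : DepBelow ψ)
    -- Assumption A1
    (hgLip : LocallyLipschitz g) (hψLip : ∀ ℓ, LocallyLipschitz (ψ ℓ))
    (hgdd : ∀ u du : USp L N, ∃ y, HasDirDeriv g u du y)
    (hψdd : ∀ ℓ, ∀ z d : ZSp n L N, ∃ y, HasDirDeriv (ψ ℓ) z d y)
    -- the reference feasible point `z⁰` (with `θ`-block `0`), giving `γ̄ = Θ(z⁰)`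
    (z0 : ZSp n L N) (hz0F : z0 ∈ Feas ψ) (hz0th : thOf z0 = 0)
    -- Lipschitz moduli on the enlarged level set `{Θ ≤ γ̄} + εB`
    (Kg : ℝ) (hKg : 0 < Kg) (K : ℕ → ℝ) (hKpos : ∀ p, 1 ≤ p → p < L → 0 < K p)
    (ε : ℝ) (hε : 0 < ε)
    (hLipg : ∀ w w' : ZSp n L N, w ∈ LevE g lam ψ β (Th g lam ψ β z0) ε →
      w' ∈ LevE g lam ψ β (Th g lam ψ β z0) ε → thOf w = thOf w' →
      |g (uOf w) - g (uOf w')| ≤ Kg * ‖uOf w - uOf w'‖)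
    (hLipψ : ∀ ℓ : Fin L, 1 ≤ (ℓ : ℕ) → ∀ w w' : ZSp n L N,
      w ∈ LevE g lam ψ β (Th g lam ψ β z0) ε →
      w' ∈ LevE g lam ψ β (Th g lam ψ β z0) ε → thOf w = thOf w' →
      ‖ψ ℓ w - ψ ℓ w'‖ ≤ K (ℓ : ℕ) * ‖uLow w ℓ - uLow w' ℓ‖)
    -- threshold condition (T) on the penalty parameters
    (hT : ∀ ℓ : Fin L, Kg * ∏ p ∈ Finset.Ico ((ℓ : ℕ) + 1) L, (1 + K p) < β ℓ)
    :
    {z : ZSp n L N | z ∈ Feas ψ ∧ ∀ z' ∈ Feas ψ, Fobj g lam z ≤ Fobj g lam z'} =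
      {z : ZSp n L N | ∀ z' : ZSp n L N, Th g lam ψ β z ≤ Th g lam ψ β z'} := by
  have hγfeas : Th g lam ψ β z0 = Fobj g lam z0 := EP.Th_eq_Fobj_of_feas g lam ψ β hz0F
  have hgc : Continuous g := hgLip.continuous
  have hψc : ∀ ℓ, Continuous (ψ ℓ) := fun ℓ => (hψLip ℓ).continuous
  have hpen : ∀ z : ZSp n L N, Th g lam ψ β z ≤ Th g lam ψ β z0 →
      ∃ w, w ∈ Feas ψ ∧ Fobj g lam w ≤ Th g lam ψ β z ∧
        (z ∉ Feas ψ → Fobj g lam w < Th g lam ψ β z) :=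
    fun z hz => EP.exact_pen ψ lam β hβ g hdep hgc hψc Kg hKg.le K hKpos
      (Th g lam ψ β z0) ε hε hLipg hLipψ hT z hz
  ext z
  simp only [Set.mem_setOf_eq]
  constructor
  · rintro ⟨hzF, hmin⟩ z'
    have hThz : Th g lam ψ β z = Fobj g lam z := EP.Th_eq_Fobj_of_feas g lam ψ β hzF
    have hzγ : Th g lam ψ β z ≤ Th g lam ψ β z0 := by
      rw [hThz, hγfeas]
      exact hmin z0 hz0F
    rcases le_or_gt (Th g lam ψ β z') (Th g lam ψ β z0) with h | h
    · obtain ⟨w, hwF, hw1, _⟩ := hpen z' h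
      calc Th g lam ψ β z = Fobj g lam z := hThz
        _ ≤ Fobj g lam w := hmin w hwF
        _ ≤ Th g lam ψ β z' := hw1
    · linarith
  · intro hmin
    have hzγ : Th g lam ψ β z ≤ Th g lam ψ β z0 := hmin z0
    obtain ⟨w, hwF, hw1, hw2⟩ := hpen z hzγ
    have hzF : z ∈ Feas ψ := by
      by_contra hnF
      have h1 := hw2 hnF
      have h2 : Th g lam ψ β z ≤ Th g lam ψ β w := hmin w
      rw [EP.Th_eq_Fobj_of_feas g lam ψ β hwF] at h2
      linarith
    refine ⟨hzF, fun z' hz'F => ?_⟩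
    have h := hmin z'
    rw [EP.Th_eq_Fobj_of_feas g lam ψ β hzF, EP.Th_eq_Fobj_of_feas g lam ψ β hz'F] at h
    exact h
end
end

section
/- Under Assumption A1 and the threshold condition (T) on the penalty parameters, for every z ∈ ℝ^{N̄} with Θ(z) ≤ γ̄, z is a d-stationary point of (P0) if and only if z is a d-stationary point of (P1). -/
open Filter Topology

noncomputable section

section General
variable {E F : Type*} [NormedAddCommGroup E] [NormedSpace ℝ E]
  [NormedAddCommGroup F] [NormedSpace ℝ F]

theorem HasDirDeriv.unique {f : E → F} {x d y y'} (h : HasDirDeriv f x d y)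
    (h' : HasDirDeriv f x d y') : y = y' := tendsto_nhds_unique h h'

theorem HasDirDeriv.dirD_eq {f : E → F} {x d y} (h : HasDirDeriv f x d y) :
    dirD f x d = y := by
  have hex : ∃ y, HasDirDeriv f x d y := ⟨y, h⟩
  rw [dirD, dif_pos hex]
  exact hex.choose_spec.unique h

theorem hasDirDeriv_dirD {f : E → F} {x d} (h : ∃ y, HasDirDeriv f x d y) :
    HasDirDeriv f x d (dirD f x d) := by
  obtain ⟨y, hy⟩ := h; rw [hy.dirD_eq]; exact hy

theorem hasDirDeriv_congr {f f' : E → F} {x d y}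
    (hf : ∀ τ : ℝ, f (x + τ • d) = f' (x + τ • d)) (h : HasDirDeriv f x d y) :
    HasDirDeriv f' x d y := by
  have h0 : f x = f' x := by simpa using hf 0
  unfold HasDirDeriv at h ⊢
  refine h.congr fun τ => by rw [hf τ, h0]

theorem HasDirDeriv.add {f g : E → ℝ} {x d yf yg} (hf : HasDirDeriv f x d yf)
    (hg : HasDirDeriv g x d yg) : HasDirDeriv (fun z => f z + g z) x d (yf + yg) := by
  unfold HasDirDeriv at hf hg ⊢
  have := hf.add hg
  refine this.congr fun τ => ?_
  simp only [smul_eq_mul]; ring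

theorem HasDirDeriv.const_mul {f : E → ℝ} {x d y} (c : ℝ) (hf : HasDirDeriv f x d y) :
    HasDirDeriv (fun z => c * f z) x d (c * y) := by
  unfold HasDirDeriv at hf ⊢
  have := hf.const_mul c
  refine this.congr fun τ => ?_
  simp only [smul_eq_mul]; ring

theorem hasDirDeriv_sum {ι : Type*} (s : Finset ι) {f : ι → E → ℝ} {x d : E} {y : ι → ℝ}
    (h : ∀ i ∈ s, HasDirDeriv (f i) x d (y i)) :
    HasDirDeriv (fun z => ∑ i ∈ s, f i z) x d (∑ i ∈ s, y i) := by
  classical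
  induction s using Finset.induction with
  | empty =>
      simp only [Finset.sum_empty]
      unfold HasDirDeriv
      simpa using tendsto_const_nhds
  | insert a s' hni ih =>
      simp only [Finset.sum_insert hni]
      exact (h a (Finset.mem_insert_self a s')).add
        (ih fun i hi => h i (Finset.mem_insert_of_mem hi))

/-- derivative along direction of a function constant along the ray -/
theorem hasDirDeriv_of_ray_const {f : E → F} {x d : E}
    (h : ∀ τ : ℝ, f (x + τ • d) = f x) : HasDirDeriv f x d 0 := by
  unfold HasDirDeriv
  have : (fun τ : ℝ => τ⁻¹ • (f (x + τ • d) - f x)) = fun _ => (0 : F) := by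
    funext τ; rw [h τ]; simp
  rw [this]; exact tendsto_const_nhds

theorem HasDirDeriv.tendsto_self {f : E → F} {x d : E} {y : F} (h : HasDirDeriv f x d y) :
    Tendsto (fun τ : ℝ => f (x + τ • d)) (𝓝[>] 0) (𝓝 (f x)) := by
  have h2 : Tendsto (fun τ : ℝ => τ • (τ⁻¹ • (f (x + τ • d) - f x)) + f x) (𝓝[>] 0)
      (𝓝 ((0 : ℝ) • y + f x)) :=
    ((tendsto_id.mono_left nhdsWithin_le_nhds).smul h).add tendsto_const_nhds
  simp only [zero_smul, zero_add] at h2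
  refine h2.congr' ?_
  filter_upwards [self_mem_nhdsWithin] with τ (hτ : 0 < τ)
  rw [smul_inv_smul₀ hτ.ne']; abel

/-- scalar-valued absolute-value directional derivative -/
def absD (a c : ℝ) : ℝ := if a = 0 then |c| else if 0 < a then c else -c

theorem abs_absD_le (a c : ℝ) : |absD a c| ≤ |c| := by
  unfold absD; split_ifs <;> simp

theorem absD_neg_self (a : ℝ) : absD a (-a) = -|a| := by
  unfold absD; split_ifs with h1 h2
  · simp [h1]
  · rw [abs_of_pos h2]
  · rw [abs_of_neg (lt_of_le_of_ne (not_lt.mp h2) h1)]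

theorem absD_zero_left (c : ℝ) : absD 0 c = |c| := by simp [absD]

theorem tendsto_abs_quot {φ : ℝ → ℝ} {c : ℝ}
    (h : Tendsto (fun τ : ℝ => τ⁻¹ * (φ τ - φ 0)) (𝓝[>] 0) (𝓝 c)) :
    Tendsto (fun τ : ℝ => τ⁻¹ * (|φ τ| - |φ 0|)) (𝓝[>] 0) (𝓝 (absD (φ 0) c)) := by
  have hφ : Tendsto φ (𝓝[>] 0) (𝓝 (φ 0)) := by
    have h2 : Tendsto (fun τ : ℝ => τ * (τ⁻¹ * (φ τ - φ 0)) + φ 0) (𝓝[>] 0)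
        (𝓝 ((0 : ℝ) * c + φ 0)) :=
      ((tendsto_id.mono_left nhdsWithin_le_nhds).mul h).add tendsto_const_nhds
    simp only [zero_mul, zero_add] at h2
    refine h2.congr' ?_
    filter_upwards [self_mem_nhdsWithin] with τ (hτ : 0 < τ)
    rw [mul_inv_cancel_left₀ hτ.ne']; ring
  rcases lt_trichotomy (φ 0) 0 with hn | h0 | hp
  · have hev : ∀ᶠ τ in 𝓝[>] (0:ℝ), φ τ < 0 :=
      hφ (Iio_mem_nhds hn)
    have : absD (φ 0) c = -c := by unfold absD; rw [if_neg hn.ne, if_neg (not_lt.mpr hn.le)]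
    rw [this]
    refine (h.neg).congr' ?_
    filter_upwards [hev] with τ hτ
    rw [abs_of_neg hτ, abs_of_neg hn]; ring
  · rw [h0, absD_zero_left]
    have := h.abs
    refine this.congr' ?_
    filter_upwards [self_mem_nhdsWithin] with τ (hτ : 0 < τ)
    rw [h0, abs_mul, abs_of_pos (inv_pos.mpr hτ)]; simp
  · have hev : ∀ᶠ τ in 𝓝[>] (0:ℝ), 0 < φ τ := hφ (Ioi_mem_nhds hp)
    have : absD (φ 0) c = c := by unfold absD; rw [if_neg hp.ne', if_pos hp]
    rw [this]
    refine h.congr' ?_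
    filter_upwards [hev] with τ hτ
    rw [abs_of_pos hτ, abs_of_pos hp]

end General
section General2
variable {E F : Type*} [NormedAddCommGroup E] [NormedSpace ℝ E]
  [NormedAddCommGroup F] [NormedSpace ℝ F]

/-- Locally Lipschitz + directionally differentiable ⇒ derivative along varying directions. -/
theorem ddStrong {f : E → F} (hf : LocallyLipschitz f) {x δ : E} {y : F}
    (h : HasDirDeriv f x δ y) {τ : ℕ → ℝ} {δs : ℕ → E}
    (hτ : ∀ k, 0 < τ k) (hτ0 : Tendsto τ atTop (𝓝 0)) (hδ : Tendsto δs atTop (𝓝 δ)) :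
    Tendsto (fun k => (τ k)⁻¹ • (f (x + τ k • δs k) - f x)) atTop (𝓝 y) := by
  obtain ⟨Kf, t, ht, hlip⟩ := hf x
  obtain ⟨r, hr, hball⟩ := Metric.mem_nhds_iff.mp ht
  have hτIoi : Tendsto τ atTop (𝓝[>] 0) :=
    tendsto_nhdsWithin_of_tendsto_nhds_of_eventually_within _ hτ0
      (Eventually.of_forall fun k => hτ k)
  have hA : Tendsto (fun k => (τ k)⁻¹ • (f (x + τ k • δ) - f x)) atTop (𝓝 y) :=
    h.comp hτIoi
  have hB0 : Tendsto (fun k => (Kf : ℝ) * ‖δs k - δ‖) atTop (𝓝 0) := by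
    have h1 : Tendsto (fun k => δs k - δ) atTop (𝓝 (δ - δ)) := hδ.sub tendsto_const_nhds
    rw [sub_self] at h1
    simpa using h1.norm.const_mul (Kf : ℝ)
  -- eventually points in ball
  have hx1 : Tendsto (fun k => x + τ k • δs k) atTop (𝓝 x) := by
    have : Tendsto (fun k => x + τ k • δs k) atTop (𝓝 (x + (0:ℝ) • δ)) :=
      tendsto_const_nhds.add (hτ0.smul hδ)
    simpa using this
  have hx2 : Tendsto (fun k => x + τ k • δ) atTop (𝓝 x) := by
    have : Tendsto (fun k => x + τ k • δ) atTop (𝓝 (x + (0:ℝ) • δ)) :=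
      tendsto_const_nhds.add (hτ0.smul tendsto_const_nhds)
    simpa using this
  have hev1 : ∀ᶠ k in atTop, x + τ k • δs k ∈ Metric.ball x r :=
    hx1 (Metric.ball_mem_nhds x hr)
  have hev2 : ∀ᶠ k in atTop, x + τ k • δ ∈ Metric.ball x r :=
    hx2 (Metric.ball_mem_nhds x hr)
  have hBsm : Tendsto (fun k => (τ k)⁻¹ • (f (x + τ k • δs k) - f (x + τ k • δ))) atTop
      (𝓝 0) := by
    apply squeeze_zero_norm' _ hB0
    filter_upwards [hev1, hev2] with k h1 h2
    have hd := hlip (hball h1) (hball h2)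
    rw [edist_dist, edist_dist] at hd
    have hd' : dist (f (x + τ k • δs k)) (f (x + τ k • δ)) ≤
        (Kf : ℝ) * dist (x + τ k • δs k) (x + τ k • δ) := by
      have := (ENNReal.toReal_le_toReal (by finiteness) (by finiteness)).mpr hd
      rwa [ENNReal.toReal_mul, ENNReal.toReal_ofReal dist_nonneg,
        ENNReal.toReal_ofReal dist_nonneg, ENNReal.coe_toReal] at this
    rw [norm_smul, norm_inv, Real.norm_eq_abs, abs_of_pos (hτ k)]
    rw [← dist_eq_norm]
    calc (τ k)⁻¹ * dist (f (x + τ k • δs k)) (f (x + τ k • δ))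
        ≤ (τ k)⁻¹ * ((Kf : ℝ) * dist (x + τ k • δs k) (x + τ k • δ)) := by
          exact mul_le_mul_of_nonneg_left hd' (inv_pos.mpr (hτ k)).le
      _ = (Kf : ℝ) * ‖δs k - δ‖ := by
          rw [dist_eq_norm]
          have : x + τ k • δs k - (x + τ k • δ) = τ k • (δs k - δ) := by
            rw [smul_sub]; abel
          rw [this, norm_smul, Real.norm_eq_abs, abs_of_pos (hτ k)]
          have hτne : τ k ≠ 0 := (hτ k).ne'
          field_simp
  have := hBsm.add hA
  simp only [zero_add] at this
  refine this.congr fun k => ?_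
  rw [← smul_add]
  congr 1
  abel

/-- Discrete Grönwall-type estimate. -/
theorem gronwall_sum (L : ℕ) (a ρ : ℕ → ℝ) (K : ℕ → ℝ)
    (hρ : ∀ ℓ, ℓ < L → 0 ≤ ρ ℓ) (hK : ∀ p, 1 ≤ p → p < L → 0 ≤ K p)
    (ha : ∀ ℓ, ℓ < L → a ℓ ≤ ρ ℓ + K ℓ * ∑ j ∈ Finset.range ℓ, a j)
    (ha0 : 0 < L → a 0 ≤ ρ 0) :
    ∑ ℓ ∈ Finset.range L, a ℓ ≤
      ∑ ℓ ∈ Finset.range L, (∏ p ∈ Finset.Ico (ℓ + 1) L, (1 + K p)) * ρ ℓ := by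
  -- strengthen: ∀ m ≤ L, sum_{ℓ<m} a ℓ ≤ ∑_{ℓ<m} (∏_{p ∈ Ico (ℓ+1) m} (1+K p)) * ρ ℓ
  suffices H : ∀ m, m ≤ L → ∑ ℓ ∈ Finset.range m, a ℓ ≤
      ∑ ℓ ∈ Finset.range m, (∏ p ∈ Finset.Ico (ℓ + 1) m, (1 + K p)) * ρ ℓ from H L le_rfl
  intro m hm
  induction m with
  | zero => simp
  | succ m ih =>
    have hmL : m < L := hm
    have ihm := ih (le_of_lt hmL)
    rcases Nat.eq_zero_or_pos m with hm0 | hmpos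
    · subst hm0
      simpa using ha0 hmL
    · have h1K : (0:ℝ) ≤ 1 + K m := by
        have := hK m hmpos hmL; linarith
    -- a m ≤ ρ m + K m * S m
      have ham := ha m hmL
      have hSm : ∑ ℓ ∈ Finset.range (m+1), a ℓ ≤
          (1 + K m) * (∑ ℓ ∈ Finset.range m, (∏ p ∈ Finset.Ico (ℓ+1) m, (1 + K p)) * ρ ℓ)
            + ρ m := by
        rw [Finset.sum_range_succ]
        have hKm0 : (0:ℝ) ≤ K m := hK m hmpos hmL
        have hS := ihm
        nlinarith [hS, ham, hKm0]
      refine hSm.trans ?_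
      rw [Finset.sum_range_succ, Finset.mul_sum]
      have hlast : (∏ p ∈ Finset.Ico (m+1) (m+1), (1 + K p)) * ρ m = ρ m := by simp
      rw [hlast]
      apply add_le_add_left
      apply Finset.sum_le_sum
      intro ℓ hℓ
      have hℓm : ℓ < m := Finset.mem_range.mp hℓ
      have : (1 + K m) * ((∏ p ∈ Finset.Ico (ℓ+1) m, (1 + K p)) * ρ ℓ) =
          ((∏ p ∈ Finset.Ico (ℓ+1) m, (1 + K p)) * (1 + K m)) * ρ ℓ := by ring
      rw [this]
      have hprod : (∏ p ∈ Finset.Ico (ℓ+1) m, (1 + K p)) * (1 + K m) =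
          ∏ p ∈ Finset.Ico (ℓ+1) (m+1), (1 + K p) := by
        rw [Finset.prod_Ico_succ_top (Nat.succ_le_of_lt hℓm)]
      rw [hprod]
  -- need to show monotonicity of target product? no: products over Ico (ℓ+1) m vs (ℓ+1) L differ!
end General2
section Euc
variable {ι : Type*} [Fintype ι]

theorem sqrt_sum_sq_le {f : ι → ℝ} (hf : ∀ i, 0 ≤ f i) :
    Real.sqrt (∑ i, f i ^ 2) ≤ ∑ i, f i := by
  have h1 : ∑ i, f i ^ 2 ≤ (∑ i, f i) ^ 2 :=
    Finset.sum_sq_le_sq_sum_of_nonneg (fun i _ => hf i)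
  calc Real.sqrt (∑ i, f i ^ 2) ≤ Real.sqrt ((∑ i, f i) ^ 2) := Real.sqrt_le_sqrt h1
    _ = ∑ i, f i := Real.sqrt_sq (Finset.sum_nonneg fun i _ => hf i)

theorem tendsto_euc_iff {α : Type*} {l : Filter α} {f : α → EuclideanSpace ℝ ι}
    {x : EuclideanSpace ℝ ι} :
    Tendsto f l (𝓝 x) ↔ ∀ i, Tendsto (fun a => f a i) l (𝓝 (x i)) := by
  rw [(PiLp.homeomorph 2 (fun _ : ι => ℝ)).isInducing.tendsto_nhds_iff, tendsto_pi_nhds]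
  rfl

theorem euc_norm_eq_sqrt (x : EuclideanSpace ℝ ι) : ‖x‖ = Real.sqrt (∑ i, x i ^ 2) := by
  rw [EuclideanSpace.norm_eq]
  congr 1
  exact Finset.sum_congr rfl fun i _ => by rw [Real.norm_eq_abs, sq_abs]

theorem euc_norm_le_sum_abs (x : EuclideanSpace ℝ ι) : ‖x‖ ≤ ∑ i, |x i| := by
  rw [euc_norm_eq_sqrt]
  have : ∀ i : ι, x i ^ 2 = |x i| ^ 2 := fun i => (sq_abs _).symm
  rw [Finset.sum_congr rfl fun i _ => this i]
  exact sqrt_sum_sq_le fun i => abs_nonneg _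

theorem euc_sq_norm (x : EuclideanSpace ℝ ι) : ‖x‖ ^ 2 = ∑ i, x i ^ 2 := by
  rw [euc_norm_eq_sqrt]
  exact Real.sq_sqrt (Finset.sum_nonneg fun i _ => sq_nonneg _)

end Euc

section MultiLemmas
variable {n L : ℕ} {N : Fin L → ℕ}

theorem thOf_add_smul (z d : ZSp n L N) (τ : ℝ) :
    thOf (z + τ • d) = thOf z + τ • thOf d := by ext; simp [thOf]
theorem uOf_add_smul (z d : ZSp n L N) (τ : ℝ) :
    uOf (z + τ • d) = uOf z + τ • uOf d := by ext; simp [uOf]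
theorem uBlk_add_smul (z d : ZSp n L N) (τ : ℝ) (ℓ : Fin L) :
    uBlk (z + τ • d) ℓ = uBlk z ℓ + τ • uBlk d ℓ := by ext; simp [uBlk]

/-- ℕ-indexed block norms of the `u`-part of a direction. -/
def bn (D : ZSp n L N) (p : ℕ) : ℝ := if h : p < L then ‖uBlk D ⟨p, h⟩‖ else 0

theorem bn_nonneg (D : ZSp n L N) (p : ℕ) : 0 ≤ bn D p := by
  unfold bn; split_ifs <;> simp [norm_nonneg]

theorem norm_uOf_le_sum_bn (D : ZSp n L N) : ‖uOf D‖ ≤ ∑ p ∈ Finset.range L, bn D p := by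
  have h1 : ‖uOf D‖ = Real.sqrt (∑ ℓ : Fin L, ‖uBlk D ℓ‖ ^ 2) := by
    rw [euc_norm_eq_sqrt]
    congr 1
    rw [← Finset.univ_sigma_univ, Finset.sum_sigma]
    refine Finset.sum_congr rfl fun ℓ _ => ?_
    rw [euc_sq_norm]
    simp [uOf, uBlk]
  rw [h1, ← Fin.sum_univ_eq_sum_range (fun p => bn D p) L]
  have h2 : ∀ ℓ : Fin L, bn D (ℓ : ℕ) = ‖uBlk D ℓ‖ := by
    intro ℓ; unfold bn; rw [dif_pos ℓ.2]
  calc Real.sqrt (∑ ℓ : Fin L, ‖uBlk D ℓ‖ ^ 2) ≤ ∑ ℓ : Fin L, ‖uBlk D ℓ‖ :=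
        sqrt_sum_sq_le fun ℓ => norm_nonneg _
    _ = ∑ ℓ : Fin L, bn D (ℓ : ℕ) := by exact Finset.sum_congr rfl fun ℓ _ => (h2 ℓ).symm

theorem norm_uLow_le_sum_bn (D : ZSp n L N) (ℓ : Fin L) :
    ‖uLow D ℓ‖ ≤ ∑ p ∈ Finset.range (ℓ : ℕ), bn D p := by
  have h1 : ‖uLow D ℓ‖ = Real.sqrt (∑ j : Fin L, if j < ℓ then ‖uBlk D j‖ ^ 2 else 0) := by
    rw [euc_norm_eq_sqrt]
    congr 1
    rw [← Finset.univ_sigma_univ, Finset.sum_sigma]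
    refine Finset.sum_congr rfl fun j _ => ?_
    by_cases hj : j < ℓ
    · rw [if_pos hj, euc_sq_norm]
      refine Finset.sum_congr rfl fun i _ => ?_
      show (uLow D ℓ ⟨j, i⟩) ^ 2 = _
      simp [uLow, uBlk, hj]
    · rw [if_neg hj]
      refine Finset.sum_eq_zero fun i _ => ?_
      show (uLow D ℓ ⟨j, i⟩) ^ 2 = 0
      simp [uLow, hj]
  rw [h1]
  have key : Real.sqrt (∑ j : Fin L, if j < ℓ then ‖uBlk D j‖ ^ 2 else 0)
      ≤ ∑ j : Fin L, if j < ℓ then ‖uBlk D j‖ else 0 := by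
    have := sqrt_sum_sq_le (f := fun j : Fin L => if j < ℓ then ‖uBlk D j‖ else 0)
      (fun j => by split_ifs <;> simp)
    refine le_trans (le_of_eq ?_) this
    congr 1
    exact Finset.sum_congr rfl fun j _ => by by_cases hj : j < ℓ <;> simp [hj]
  refine key.trans (le_of_eq ?_)
  have step1 : (∑ j : Fin L, if j < ℓ then ‖uBlk D j‖ else 0)
      = ∑ p ∈ Finset.range L, (if p < (ℓ:ℕ) then bn D p else 0) := by
    rw [← Fin.sum_univ_eq_sum_range (fun p => if p < (ℓ:ℕ) then bn D p else 0) L]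
    refine Finset.sum_congr rfl fun j _ => ?_
    by_cases hj : j < ℓ
    · rw [if_pos hj, if_pos (by exact_mod_cast hj), bn, dif_pos j.2]
    · rw [if_neg hj, if_neg (by exact_mod_cast hj)]
  rw [step1, ← Finset.sum_filter]
  congr 1
  ext p
  simp only [Finset.mem_filter, Finset.mem_range]
  constructor
  · rintro ⟨_, h2⟩; exact h2
  · intro h; exact ⟨h.trans ℓ.2, h⟩

end MultiLemmas
section General3
variable {E F : Type*} [NormedAddCommGroup E] [NormedSpace ℝ E]
  [NormedAddCommGroup F] [NormedSpace ℝ F]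

theorem hasDirDeriv_dir_congr {f : E → F} {x d d' : E} {y : F}
    (h : ∀ τ : ℝ, f (x + τ • d) = f (x + τ • d')) (hd : HasDirDeriv f x d y) :
    HasDirDeriv f x d' y := by
  unfold HasDirDeriv at hd ⊢
  exact hd.congr fun τ => by rw [h τ]

end General3

section GMap
variable {n L : ℕ} {N : Fin L → ℕ}

def gmap (t : TSp n) (Φ : (ℓ : Fin L) → ZSp n L N → EuclideanSpace ℝ (Fin (N ℓ)))
    (e : ZSp n L N) : ZSp n L N :=
  WithLp.toLp 2 (fun j => Sum.rec (motive := fun _ => ℝ) (fun i => t i) (fun q => Φ q.1 e q.2) j)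

theorem thOf_gmap (t : TSp n) (Φ : (ℓ : Fin L) → ZSp n L N → EuclideanSpace ℝ (Fin (N ℓ)))
    (e : ZSp n L N) : thOf (gmap t Φ e) = t := rfl

theorem uBlk_gmap (t : TSp n) (Φ : (ℓ : Fin L) → ZSp n L N → EuclideanSpace ℝ (Fin (N ℓ)))
    (e : ZSp n L N) (ℓ : Fin L) : uBlk (gmap t Φ e) ℓ = Φ ℓ e := rfl

theorem gmap_iter_fix (t : TSp n) (Φ : (ℓ : Fin L) → ZSp n L N → EuclideanSpace ℝ (Fin (N ℓ)))
    (hΦ : ∀ ℓ : Fin L, ∀ e e' : ZSp n L N, thOf e = thOf e' →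
      (∀ j : Fin L, j < ℓ → uBlk e j = uBlk e' j) → Φ ℓ e = Φ ℓ e')
    (e₀ : ZSp n L N) (h0 : thOf e₀ = t) :
    thOf ((gmap t Φ)^[L] e₀) = t ∧
      ∀ ℓ : Fin L, uBlk ((gmap t Φ)^[L] e₀) ℓ = Φ ℓ ((gmap t Φ)^[L] e₀) := by
  have inv : ∀ m : ℕ, thOf ((gmap t Φ)^[m] e₀) = t ∧
      ∀ ℓ : Fin L, (ℓ : ℕ) < m →
        uBlk ((gmap t Φ)^[m] e₀) ℓ = Φ ℓ ((gmap t Φ)^[m] e₀) := by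
    intro m
    induction m with
    | zero => exact ⟨h0, fun ℓ h => absurd h (Nat.not_lt_zero _)⟩
    | succ m ih =>
      obtain ⟨ih1, ih2⟩ := ih
      set w := (gmap t Φ)^[m] e₀ with hw
      rw [Function.iterate_succ_apply', ← hw]
      refine ⟨rfl, fun ℓ hℓ => ?_⟩
      rw [uBlk_gmap]
      refine hΦ ℓ w (gmap t Φ w) (by rw [ih1, thOf_gmap]) fun j hj => ?_
      rw [uBlk_gmap]
      exact ih2 j (lt_of_lt_of_le (by exact_mod_cast hj) (Nat.lt_succ_iff.mp hℓ))
  exact ⟨(inv L).1, fun ℓ => (inv L).2 ℓ ℓ.2⟩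

end GMap

section Master
variable {n L : ℕ} {N : Fin L → ℕ}
variable (g : USp L N → ℝ) (lam : ℝ)
  (ψ : (ℓ : Fin L) → ZSp n L N → EuclideanSpace ℝ (Fin (N ℓ))) (β : Fin L → ℝ)

theorem g_comp_hasDirDeriv (hgdd : ∀ u du : USp L N, ∃ y, HasDirDeriv g u du y)
    (z d : ZSp n L N) :
    HasDirDeriv (fun w => g (uOf w)) z d (dirD g (uOf z) (uOf d)) := by
  have hg := hasDirDeriv_dirD (hgdd (uOf z) (uOf d))
  unfold HasDirDeriv at hg ⊢
  exact hg.congr fun τ => by simp only [uOf_add_smul]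

theorem sqnorm_hasDirDeriv (z d : ZSp n L N) :
    HasDirDeriv (fun w => lam * ‖thOf w‖ ^ 2) z d
      (lam * (2 * (inner ℝ (thOf z) (thOf d) : ℝ))) := by
  unfold HasDirDeriv
  have hq : Tendsto (fun τ : ℝ => lam * (2 * (inner ℝ (thOf z) (thOf d) : ℝ) + τ * ‖thOf d‖ ^ 2))
      (𝓝[>] 0) (𝓝 (lam * (2 * (inner ℝ (thOf z) (thOf d) : ℝ) + 0 * ‖thOf d‖ ^ 2))) := by
    apply Tendsto.mono_left _ nhdsWithin_le_nhds
    exact (tendsto_const_nhds.add ((continuous_id.tendsto 0).mul tendsto_const_nhds)).const_mul lam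
  simp only [zero_mul, add_zero] at hq
  refine hq.congr' ?_
  filter_upwards [self_mem_nhdsWithin] with τ (hτ : 0 < τ)
  have hexp : ‖thOf (z + τ • d)‖ ^ 2 =
      ‖thOf z‖ ^ 2 + 2 * τ * (inner ℝ (thOf z) (thOf d) : ℝ) + τ ^ 2 * ‖thOf d‖ ^ 2 := by
    rw [thOf_add_smul, norm_add_sq_real, real_inner_smul_right, norm_smul]
    rw [Real.norm_eq_abs, abs_of_pos hτ]
    ring
  rw [smul_eq_mul, hexp]
  field_simp
  ring

theorem fobj_hasDirDeriv (hgdd : ∀ u du : USp L N, ∃ y, HasDirDeriv g u du y)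
    (z d : ZSp n L N) :
    HasDirDeriv (Fobj g lam) z d
      (dirD g (uOf z) (uOf d) + lam * (2 * (inner ℝ (thOf z) (thOf d) : ℝ))) := by
  exact (g_comp_hasDirDeriv g hgdd z d).add (sqnorm_hasDirDeriv lam z d)

theorem pen_coord_hasDirDeriv
    (hψdd : ∀ ℓ, ∀ z d : ZSp n L N, ∃ y, HasDirDeriv (ψ ℓ) z d y)
    (z d : ZSp n L N) (ℓ : Fin L) (i : Fin (N ℓ)) :
    HasDirDeriv (fun w => |uBlk w ℓ i - ψ ℓ w i|) z d
      (absD (uBlk z ℓ i - ψ ℓ z i) (uBlk d ℓ i - dirD (ψ ℓ) z d i)) := by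
  have hψ := hasDirDeriv_dirD (hψdd ℓ z d)
  unfold HasDirDeriv at hψ
  have hci : Tendsto (fun τ : ℝ => τ⁻¹ * (ψ ℓ (z + τ • d) i - ψ ℓ z i)) (𝓝[>] 0)
      (𝓝 (dirD (ψ ℓ) z d i)) := by
    have := tendsto_euc_iff.mp hψ i
    exact this.congr fun τ => by simp
  set φ : ℝ → ℝ := fun τ => uBlk (z + τ • d) ℓ i - ψ ℓ (z + τ • d) i with hφ
  have hφ0 : φ 0 = uBlk z ℓ i - ψ ℓ z i := by
    simp only [hφ]
    norm_num
  have hquot : Tendsto (fun τ : ℝ => τ⁻¹ * (φ τ - φ 0)) (𝓝[>] 0)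
      (𝓝 (uBlk d ℓ i - dirD (ψ ℓ) z d i)) := by
    have h2 := (tendsto_const_nhds (x := uBlk d ℓ i) (f := 𝓝[>] (0:ℝ))).sub hci
    refine h2.congr' ?_
    filter_upwards [self_mem_nhdsWithin] with τ (hτ : 0 < τ)
    rw [hφ0]
    simp only [hφ]
    have h3 : uBlk (z + τ • d) ℓ i = uBlk z ℓ i + τ * uBlk d ℓ i := by simp [uBlk]
    rw [h3]
    field_simp
    ring
  have habs := tendsto_abs_quot hquot
  rw [hφ0] at habs
  unfold HasDirDeriv
  exact habs.congr fun τ => by rw [smul_eq_mul]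

theorem th_hasDirDeriv (hgdd : ∀ u du : USp L N, ∃ y, HasDirDeriv g u du y)
    (hψdd : ∀ ℓ, ∀ z d : ZSp n L N, ∃ y, HasDirDeriv (ψ ℓ) z d y)
    (z d : ZSp n L N) :
    HasDirDeriv (Th g lam ψ β) z d
      (dirD g (uOf z) (uOf d) + lam * (2 * (inner ℝ (thOf z) (thOf d) : ℝ)) +
        ∑ ℓ, β ℓ * ∑ i, absD (uBlk z ℓ i - ψ ℓ z i) (uBlk d ℓ i - dirD (ψ ℓ) z d i)) := by
  refine (fobj_hasDirDeriv g lam hgdd z d).add ?_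
  refine hasDirDeriv_sum Finset.univ fun ℓ _ => ?_
  exact (hasDirDeriv_sum Finset.univ fun i _ =>
    pen_coord_hasDirDeriv ψ hψdd z d ℓ i).const_mul (β ℓ)

end Master
section Station
variable {n L : ℕ} {N : Fin L → ℕ}
variable {g : USp L N → ℝ} {lam : ℝ}
  {ψ : (ℓ : Fin L) → ZSp n L N → EuclideanSpace ℝ (Fin (N ℓ))} {β : Fin L → ℝ}

theorem thOf_zero : thOf (0 : ZSp n L N) = 0 := by ext; simp [thOf]
theorem uOf_zero : uOf (0 : ZSp n L N) = 0 := by ext; simp [uOf]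
theorem uBlk_zero (ℓ : Fin L) : uBlk (0 : ZSp n L N) ℓ = 0 := by ext; simp [uBlk]
theorem uLow_zero (ℓ : Fin L) : uLow (0 : ZSp n L N) ℓ = 0 := by
  ext j; by_cases h : j.1 < ℓ <;> simp [uLow, h]

theorem uOf_sub (a b : ZSp n L N) : uOf (a - b) = uOf a - uOf b := by ext; simp [uOf]
theorem uBlk_sub (a b : ZSp n L N) (ℓ : Fin L) : uBlk (a - b) ℓ = uBlk a ℓ - uBlk b ℓ := by ext; simp [uBlk]
theorem uLow_sub (a b : ZSp n L N) (ℓ : Fin L) :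
    uLow (a - b) ℓ = uLow a ℓ - uLow b ℓ := by
  ext j; by_cases h : j.1 < ℓ <;> simp [uLow, h]

theorem uOf_smul (c : ℝ) (a : ZSp n L N) : uOf (c • a) = c • uOf a := by ext; simp [uOf]
theorem uLow_smul (c : ℝ) (a : ZSp n L N) (ℓ : Fin L) : uLow (c • a) ℓ = c • uLow a ℓ := by
  ext j; by_cases h : j.1 < ℓ <;> simp [uLow, h]

theorem lev_ray {γ ε : ℝ} (hε : 0 < ε) {z : ZSp n L N} (hz : Th g lam ψ β z ≤ γ)
    (e : ZSp n L N) : ∀ᶠ τ in 𝓝[>] (0:ℝ), z + τ • e ∈ LevE g lam ψ β γ ε := by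
  have hT : (0:ℝ) < ε / (‖e‖ + 1) := by positivity
  filter_upwards [Ioo_mem_nhdsGT_of_mem (Set.left_mem_Ico.mpr hT)] with τ hτ
  obtain ⟨hτ0, hτT⟩ := hτ
  refine ⟨z, hz, ?_⟩
  rw [add_sub_cancel_left, norm_smul, Real.norm_eq_abs, abs_of_pos hτ0]
  have h1 : τ * ‖e‖ ≤ τ * (‖e‖ + 1) := by nlinarith [norm_nonneg e]
  have h2 : τ * (‖e‖ + 1) < ε := by
    have := (lt_div_iff₀ (by positivity : (0:ℝ) < ‖e‖ + 1)).mp hτT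
    linarith
  linarith

theorem dirD_g_dir_zero (u : USp L N) : dirD g u 0 = 0 :=
  (hasDirDeriv_of_ray_const fun τ => by rw [smul_zero, add_zero]).dirD_eq

theorem dirD_psi_dir_zero (ℓ : Fin L) (z : ZSp n L N) : dirD (ψ ℓ) z 0 = 0 :=
  (hasDirDeriv_of_ray_const fun τ => by rw [smul_zero, add_zero]).dirD_eq

theorem dirD_psi_congr (hdep : DepBelow ψ)
    (hψdd : ∀ ℓ, ∀ z d : ZSp n L N, ∃ y, HasDirDeriv (ψ ℓ) z d y)
    (z : ZSp n L N) (ℓ : Fin L) {e e' : ZSp n L N} (hth : thOf e = thOf e')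
    (hblk : ∀ j : Fin L, j < ℓ → uBlk e j = uBlk e' j) :
    dirD (ψ ℓ) z e = dirD (ψ ℓ) z e' := by
  have hray : ∀ τ : ℝ, ψ ℓ (z + τ • e) = ψ ℓ (z + τ • e') := by
    intro τ
    refine hdep ℓ _ _ ?_ fun j hj => ?_
    · rw [thOf_add_smul, thOf_add_smul, hth]
    · rw [uBlk_add_smul, uBlk_add_smul, hblk j hj]
  exact ((hasDirDeriv_dir_congr hray (hasDirDeriv_dirD (hψdd ℓ z e))).dirD_eq).symm

theorem dirD_g_diff {γ ε Kg : ℝ} (hε : 0 < ε)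
    (hgdd : ∀ u du : USp L N, ∃ y, HasDirDeriv g u du y)
    (hLipg : ∀ w w' : ZSp n L N, w ∈ LevE g lam ψ β γ ε → w' ∈ LevE g lam ψ β γ ε →
      thOf w = thOf w' → |g (uOf w) - g (uOf w')| ≤ Kg * ‖uOf w - uOf w'‖)
    {z : ZSp n L N} (hz : Th g lam ψ β z ≤ γ)
    (e e' : ZSp n L N) (hth : thOf e = thOf e') :
    |dirD g (uOf z) (uOf e) - dirD g (uOf z) (uOf e')| ≤ Kg * ‖uOf e - uOf e'‖ := by
  have he := g_comp_hasDirDeriv g hgdd z e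
  have he' := g_comp_hasDirDeriv g hgdd z e'
  unfold HasDirDeriv at he he'
  have hdiff := (he.sub he').abs
  refine le_of_tendsto hdiff ?_
  filter_upwards [lev_ray hε hz e, lev_ray hε hz e', self_mem_nhdsWithin]
    with τ h1 h2 (hτ : 0 < τ)
  have hthw : thOf (z + τ • e) = thOf (z + τ • e') := by
    rw [thOf_add_smul, thOf_add_smul, hth]
  have hL := hLipg _ _ h1 h2 hthw
  have husub : uOf (z + τ • e) - uOf (z + τ • e') = τ • (uOf e - uOf e') := by
    rw [uOf_add_smul, uOf_add_smul, smul_sub]; abel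
  rw [husub, norm_smul, Real.norm_eq_abs, abs_of_pos hτ] at hL
  have key : τ⁻¹ • (g (uOf (z + τ • e)) - g (uOf z)) - τ⁻¹ • (g (uOf (z + τ • e')) - g (uOf z))
      = τ⁻¹ * (g (uOf (z + τ • e)) - g (uOf (z + τ • e'))) := by
    simp only [smul_eq_mul]; ring
  show |_| ≤ _
  rw [key, abs_mul, abs_of_pos (inv_pos.mpr hτ)]
  calc τ⁻¹ * |g (uOf (z + τ • e)) - g (uOf (z + τ • e'))|
      ≤ τ⁻¹ * (Kg * (τ * ‖uOf e - uOf e'‖)) :=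
        mul_le_mul_of_nonneg_left hL (inv_pos.mpr hτ).le
    _ = Kg * ‖uOf e - uOf e'‖ := by field_simp

theorem dirD_psi_diff {γ ε : ℝ} {K : ℕ → ℝ} (hε : 0 < ε)
    (hψdd : ∀ ℓ, ∀ z d : ZSp n L N, ∃ y, HasDirDeriv (ψ ℓ) z d y)
    (hLipψ : ∀ ℓ : Fin L, 1 ≤ (ℓ : ℕ) → ∀ w w' : ZSp n L N,
      w ∈ LevE g lam ψ β γ ε → w' ∈ LevE g lam ψ β γ ε → thOf w = thOf w' →
      ‖ψ ℓ w - ψ ℓ w'‖ ≤ K (ℓ : ℕ) * ‖uLow w ℓ - uLow w' ℓ‖)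
    {z : ZSp n L N} (hz : Th g lam ψ β z ≤ γ)
    (ℓ : Fin L) (hℓ : 1 ≤ (ℓ : ℕ))
    (e e' : ZSp n L N) (hth : thOf e = thOf e') :
    ‖dirD (ψ ℓ) z e - dirD (ψ ℓ) z e'‖ ≤ K (ℓ : ℕ) * ‖uLow e ℓ - uLow e' ℓ‖ := by
  have he := hasDirDeriv_dirD (hψdd ℓ z e)
  have he' := hasDirDeriv_dirD (hψdd ℓ z e')
  unfold HasDirDeriv at he he'
  have hdiff := (he.sub he').norm
  refine le_of_tendsto hdiff ?_
  filter_upwards [lev_ray hε hz e, lev_ray hε hz e', self_mem_nhdsWithin]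
    with τ h1 h2 (hτ : 0 < τ)
  have hthw : thOf (z + τ • e) = thOf (z + τ • e') := by
    rw [thOf_add_smul, thOf_add_smul, hth]
  have hL := hLipψ ℓ hℓ _ _ h1 h2 hthw
  have husub : uLow (z + τ • e) ℓ - uLow (z + τ • e') ℓ = τ • (uLow e ℓ - uLow e' ℓ) := by
    rw [← uLow_sub, ← uLow_sub, ← uLow_smul]
    congr 1
    rw [smul_sub]; abel
  rw [husub, norm_smul, Real.norm_eq_abs, abs_of_pos hτ] at hL
  have key : τ⁻¹ • (ψ ℓ (z + τ • e) - ψ ℓ z) - τ⁻¹ • (ψ ℓ (z + τ • e') - ψ ℓ z)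
      = τ⁻¹ • (ψ ℓ (z + τ • e) - ψ ℓ (z + τ • e')) := by
    rw [← smul_sub]
    congr 1
    abel
  rw [key, norm_smul, norm_inv, Real.norm_eq_abs, abs_of_pos hτ]
  calc τ⁻¹ * ‖ψ ℓ (z + τ • e) - ψ ℓ (z + τ • e')‖
      ≤ τ⁻¹ * (K (ℓ : ℕ) * (τ * ‖uLow e ℓ - uLow e' ℓ‖)) :=
        mul_le_mul_of_nonneg_left hL (inv_pos.mpr hτ).le
    _ = K (ℓ : ℕ) * ‖uLow e ℓ - uLow e' ℓ‖ := by field_simp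

end Station
section KeyBound
variable {n L : ℕ} {N : Fin L → ℕ}

theorem key_bound {K : ℕ → ℝ} (hK : ∀ p, 1 ≤ p → p < L → 0 ≤ K p)
    (D : ZSp n L N) (ρF : Fin L → ℝ) (hρ : ∀ ℓ, 0 ≤ ρF ℓ)
    (hrec0 : ∀ ℓ : Fin L, (ℓ : ℕ) = 0 → ‖uBlk D ℓ‖ ≤ ρF ℓ)
    (hrec : ∀ ℓ : Fin L, 1 ≤ (ℓ : ℕ) →
      ‖uBlk D ℓ‖ ≤ ρF ℓ + K (ℓ : ℕ) * ∑ p ∈ Finset.range (ℓ : ℕ), bn D p) :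
    ‖uOf D‖ ≤ ∑ ℓ : Fin L, (∏ p ∈ Finset.Ico ((ℓ : ℕ) + 1) L, (1 + K p)) * ρF ℓ := by
  classical
  set ρN : ℕ → ℝ := fun p => if h : p < L then ρF ⟨p, h⟩ else 0 with hρN
  have hbn_eq : ∀ p (h : p < L), bn D p = ‖uBlk D ⟨p, h⟩‖ := by
    intro p h; unfold bn; rw [dif_pos h]
  have hρN_eq : ∀ p (h : p < L), ρN p = ρF ⟨p, h⟩ := by
    intro p h; simp only [hρN]; rw [dif_pos h]
  have hgr := gronwall_sum L (bn D) ρN K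
    (fun p hp => by rw [hρN_eq p hp]; exact hρ _)
    (fun p h1 h2 => hK p h1 h2)
    (fun p hp => by
      rcases Nat.eq_zero_or_pos p with h0 | h1
      · subst h0
        rw [hbn_eq 0 hp, hρN_eq 0 hp]
        simpa using hrec0 ⟨0, hp⟩ rfl
      · rw [hbn_eq p hp, hρN_eq p hp]
        exact hrec ⟨p, hp⟩ h1)
    (fun hp => by
      rw [hbn_eq 0 hp, hρN_eq 0 hp]
      exact hrec0 ⟨0, hp⟩ rfl)
  refine (norm_uOf_le_sum_bn D).trans (hgr.trans (le_of_eq ?_))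
  rw [← Fin.sum_univ_eq_sum_range (fun p => (∏ q ∈ Finset.Ico (p + 1) L, (1 + K q)) * ρN p) L]
  refine Finset.sum_congr rfl fun ℓ _ => ?_
  rw [hρN_eq _ ℓ.2]

theorem prod_one_add_nonneg {K : ℕ → ℝ} (hK : ∀ p, 1 ≤ p → p < L → 0 ≤ K p) (m : ℕ) :
    0 ≤ ∏ p ∈ Finset.Ico (m + 1) L, (1 + K p) := by
  refine Finset.prod_nonneg fun p hp => ?_
  obtain ⟨h1, h2⟩ := Finset.mem_Ico.mp hp
  have := hK p (le_trans (Nat.le_add_left 1 m) h1) h2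
  linarith

end KeyBound


/-- Theorem 3.2(b): under Assumption A1 and the threshold condition (T), on the level set
`{Θ ≤ γ̄}` the d-stationary points of (P0) and (P1) coincide. -/
theorem stmt12
    {n L : ℕ} (hn : 0 < n) (hL : 0 < L) {N : Fin L → ℕ} (hN : ∀ ℓ, 0 < N ℓ)
    (lam : ℝ) (hlam : 0 < lam) (β : Fin L → ℝ) (hβ : ∀ ℓ, 0 < β ℓ)
    (g : USp L N → ℝ) (hg0 : ∀ u, 0 ≤ g u)
    (ψ : (ℓ : Fin L) → ZSp n L N → EuclideanSpace ℝ (Fin (N ℓ)))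
    (hdep : DepBelow ψ)
    -- Assumption A1
    (hgLip : LocallyLipschitz g) (hψLip : ∀ ℓ, LocallyLipschitz (ψ ℓ))
    (hgdd : ∀ u du : USp L N, ∃ y, HasDirDeriv g u du y)
    (hψdd : ∀ ℓ, ∀ z d : ZSp n L N, ∃ y, HasDirDeriv (ψ ℓ) z d y)
    -- the reference feasible point `z⁰` (with `θ`-block `0`), giving `γ̄ = Θ(z⁰)`
    (z0 : ZSp n L N) (hz0F : z0 ∈ Feas ψ) (hz0th : thOf z0 = 0)
    -- Lipschitz moduli on the enlarged level set `{Θ ≤ γ̄} + εB`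
    (Kg : ℝ) (hKg : 0 < Kg) (K : ℕ → ℝ) (hKpos : ∀ p, 1 ≤ p → p < L → 0 < K p)
    (ε : ℝ) (hε : 0 < ε)
    (hLipg : ∀ w w' : ZSp n L N, w ∈ LevE g lam ψ β (Th g lam ψ β z0) ε →
      w' ∈ LevE g lam ψ β (Th g lam ψ β z0) ε → thOf w = thOf w' →
      |g (uOf w) - g (uOf w')| ≤ Kg * ‖uOf w - uOf w'‖)
    (hLipψ : ∀ ℓ : Fin L, 1 ≤ (ℓ : ℕ) → ∀ w w' : ZSp n L N,
      w ∈ LevE g lam ψ β (Th g lam ψ β z0) ε →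
      w' ∈ LevE g lam ψ β (Th g lam ψ β z0) ε → thOf w = thOf w' →
      ‖ψ ℓ w - ψ ℓ w'‖ ≤ K (ℓ : ℕ) * ‖uLow w ℓ - uLow w' ℓ‖)
    -- threshold condition (T) on the penalty parameters
    (hT : ∀ ℓ : Fin L, Kg * ∏ p ∈ Finset.Ico ((ℓ : ℕ) + 1) L, (1 + K p) < β ℓ)
    :
    ∀ z : ZSp n L N, Th g lam ψ β z ≤ Th g lam ψ β z0 →
      ((z ∈ Feas ψ ∧ ∀ d ∈ tangentCone (Feas ψ) z, 0 ≤ dirD (Fobj g lam) z d) ↔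
        ∀ d, 0 ≤ dirD (Th g lam ψ β) z d) := by
  intro z hz
  have hKnn : ∀ p, 1 ≤ p → p < L → 0 ≤ K p := fun p h1 h2 => (hKpos p h1 h2).le
  constructor
  · rintro ⟨hzF, hstat⟩ d
    have hΦdep : ∀ ℓ : Fin L, ∀ e e' : ZSp n L N, thOf e = thOf e' →
        (∀ j : Fin L, j < ℓ → uBlk e j = uBlk e' j) →
        (fun (ℓ : Fin L) (e : ZSp n L N) => dirD (ψ ℓ) z e) ℓ e =
        (fun (ℓ : Fin L) (e : ZSp n L N) => dirD (ψ ℓ) z e) ℓ e' := by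
      intro ℓ e e' hth hblk
      simp only
      exact dirD_psi_congr hdep hψdd z ℓ hth hblk
    obtain ⟨hdth, hdblk⟩ := gmap_iter_fix (thOf d)
      (fun (ℓ : Fin L) (e : ZSp n L N) => dirD (ψ ℓ) z e) hΦdep d rfl
    set dh := (gmap (thOf d) (fun (ℓ : Fin L) (e : ZSp n L N) => dirD (ψ ℓ) z e))^[L] d
      with hdh
    set τs : ℕ → ℝ := fun k => ((k : ℝ) + 1)⁻¹ with hτs
    have hτpos : ∀ k, 0 < τs k := fun k => by positivity
    have hτ0 : Tendsto τs atTop (𝓝 0) := by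
      have := tendsto_one_div_add_atTop_nhds_zero_nat (𝕜 := ℝ)
      simpa [hτs, one_div] using this
    have hlim : ∀ m : ℕ, Tendsto (fun k => (τs k)⁻¹ •
        ((gmap (thOf (z + τs k • d)) ψ)^[m] (z + τs k • d) - z)) atTop
        (𝓝 ((gmap (thOf d) (fun (ℓ : Fin L) (e : ZSp n L N) => dirD (ψ ℓ) z e))^[m] d)) := by
      intro m
      induction m with
      | zero =>
        simp only [Function.iterate_zero, id_eq]
        have heq : ∀ k, (τs k)⁻¹ • (z + τs k • d - z) = d := fun k => by
          rw [add_sub_cancel_left, inv_smul_smul₀ (hτpos k).ne']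
        rw [funext heq]
        exact tendsto_const_nhds
      | succ m ih =>
        rw [tendsto_euc_iff]
        intro j
        simp only [Function.iterate_succ_apply']
        rcases j with i | ⟨ℓ, i⟩
        · have heq : ∀ k, ((τs k)⁻¹ • (gmap (thOf (z + τs k • d)) ψ
              ((gmap (thOf (z + τs k • d)) ψ)^[m] (z + τs k • d)) - z)) (Sum.inl i)
              = d (Sum.inl i) := by
            intro k
            show (τs k)⁻¹ * ((z (Sum.inl i) + τs k * d (Sum.inl i)) - z (Sum.inl i)) = _
            have := (hτpos k).ne'
            field_simp
            ring
          rw [funext heq]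
          exact tendsto_const_nhds
        · have hzrw2 : ∀ k, z + τs k • ((τs k)⁻¹ •
              ((gmap (thOf (z + τs k • d)) ψ)^[m] (z + τs k • d) - z))
              = (gmap (thOf (z + τs k • d)) ψ)^[m] (z + τs k • d) := fun k => by
            rw [smul_inv_smul₀ (hτpos k).ne', add_sub_cancel]
          have hvec := ddStrong (hψLip ℓ) (hasDirDeriv_dirD (hψdd ℓ z
            ((gmap (thOf d) (fun (ℓ : Fin L) (e : ZSp n L N) => dirD (ψ ℓ) z e))^[m] d)))
            hτpos hτ0 ih
          have hci := tendsto_euc_iff.mp hvec i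
          have hzc : z (Sum.inr ⟨ℓ, i⟩) = ψ ℓ z i := congrArg (fun v => v i) (hzF ℓ)
          refine hci.congr fun k => ?_
          show (τs k)⁻¹ * (ψ ℓ (z + τs k • ((τs k)⁻¹ •
              ((gmap (thOf (z + τs k • d)) ψ)^[m] (z + τs k • d) - z))) i - ψ ℓ z i) = _
          rw [hzrw2 k]
          show _ = (τs k)⁻¹ * (ψ ℓ ((gmap (thOf (z + τs k • d)) ψ)^[m] (z + τs k • d)) i
            - z (Sum.inr ⟨ℓ, i⟩))
          rw [hzc]
    have hquot := hlim L
    have htanmem : dh ∈ tangentCone (Feas ψ) z := by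
      refine ⟨fun k => (gmap (thOf (z + τs k • d)) ψ)^[L] (z + τs k • d), τs,
        fun k => (gmap_iter_fix (thOf (z + τs k • d)) ψ hdep (z + τs k • d) rfl).2,
        ?_, hτpos, hτ0, hquot⟩
      have h1 : Tendsto (fun k => z + τs k • ((τs k)⁻¹ •
          ((gmap (thOf (z + τs k • d)) ψ)^[L] (z + τs k • d) - z))) atTop
          (𝓝 (z + (0 : ℝ) • dh)) :=
        tendsto_const_nhds.add (hτ0.smul hquot)
      simp only [zero_smul, add_zero] at h1
      refine h1.congr fun k => ?_
      rw [smul_inv_smul₀ (hτpos k).ne', add_sub_cancel]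
    have hstin := hstat dh htanmem
    rw [(fobj_hasDirDeriv g lam hgdd z dh).dirD_eq] at hstin
    rw [(th_hasDirDeriv g lam ψ β hgdd hψdd z d).dirD_eq]
    have hpens : ∀ ℓ : Fin L, (∑ i, absD (uBlk z ℓ i - ψ ℓ z i)
        (uBlk d ℓ i - dirD (ψ ℓ) z d i)) = ∑ i, |uBlk d ℓ i - dirD (ψ ℓ) z d i| := by
      intro ℓ
      refine Finset.sum_congr rfl fun i _ => ?_
      rw [show uBlk z ℓ i - ψ ℓ z i = 0 from by rw [hzF ℓ, sub_self], absD_zero_left]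
    rw [Finset.sum_congr rfl fun ℓ _ => by rw [hpens ℓ]]
    -- recursion bounds for D := d - dh
    have hthdh : thOf d = thOf dh := hdth.symm
    have hrec0 : ∀ ℓ : Fin L, (ℓ : ℕ) = 0 →
        ‖uBlk (d - dh) ℓ‖ ≤ ‖uBlk d ℓ - dirD (ψ ℓ) z d‖ := by
      intro ℓ hℓ0
      have hcongr : dirD (ψ ℓ) z dh = dirD (ψ ℓ) z d :=
        dirD_psi_congr hdep hψdd z ℓ hdth
          (fun j hj => absurd (Fin.lt_def.mp hj) (by omega))
      rw [uBlk_sub, hdblk ℓ]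
      rw [hcongr]
    have hrec : ∀ ℓ : Fin L, 1 ≤ (ℓ : ℕ) → ‖uBlk (d - dh) ℓ‖ ≤
        ‖uBlk d ℓ - dirD (ψ ℓ) z d‖ +
          K (ℓ : ℕ) * ∑ p ∈ Finset.range (ℓ : ℕ), bn (d - dh) p := by
      intro ℓ hℓ1
      have h1 : ‖dirD (ψ ℓ) z d - dirD (ψ ℓ) z dh‖ ≤ K (ℓ : ℕ) * ‖uLow (d - dh) ℓ‖ := by
        have := dirD_psi_diff hε hψdd hLipψ hz ℓ hℓ1 d dh hthdh
        rwa [← uLow_sub] at this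
      have h2 : ‖uLow (d - dh) ℓ‖ ≤ ∑ p ∈ Finset.range (ℓ : ℕ), bn (d - dh) p :=
        norm_uLow_le_sum_bn _ ℓ
      have hKnn' : 0 ≤ K (ℓ : ℕ) := hKnn _ hℓ1 ℓ.2
      have hsplit : uBlk (d - dh) ℓ = (uBlk d ℓ - dirD (ψ ℓ) z d) +
          (dirD (ψ ℓ) z d - dirD (ψ ℓ) z dh) := by
        rw [uBlk_sub, hdblk ℓ]
        abel
      calc ‖uBlk (d - dh) ℓ‖
          ≤ ‖uBlk d ℓ - dirD (ψ ℓ) z d‖ + ‖dirD (ψ ℓ) z d - dirD (ψ ℓ) z dh‖ := by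
            rw [hsplit]; exact norm_add_le _ _
        _ ≤ ‖uBlk d ℓ - dirD (ψ ℓ) z d‖ + K (ℓ : ℕ) * ‖uLow (d - dh) ℓ‖ := by linarith
        _ ≤ _ := by nlinarith [norm_nonneg (uLow (d - dh) ℓ)]
    have hKB := key_bound hKnn (d - dh) (fun ℓ => ‖uBlk d ℓ - dirD (ψ ℓ) z d‖)
      (fun ℓ => norm_nonneg _) hrec0 hrec
    -- g-part comparison
    have hgd : |dirD g (uOf z) (uOf d) - dirD g (uOf z) (uOf dh)| ≤ Kg * ‖uOf (d - dh)‖ := by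
      have := dirD_g_diff hε hgdd hLipg hz d dh hthdh
      rwa [← uOf_sub] at this
    -- per-layer comparison of coefficients
    have hρS : ∀ ℓ : Fin L, ‖uBlk d ℓ - dirD (ψ ℓ) z d‖ ≤
        ∑ i, |uBlk d ℓ i - dirD (ψ ℓ) z d i| := by
      intro ℓ
      refine (euc_norm_le_sum_abs _).trans (le_of_eq ?_)
      exact Finset.sum_congr rfl fun i _ => rfl
    have hterm : ∀ ℓ : Fin L,
        Kg * ((∏ p ∈ Finset.Ico ((ℓ : ℕ) + 1) L, (1 + K p)) * ‖uBlk d ℓ - dirD (ψ ℓ) z d‖) ≤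
        β ℓ * ∑ i, |uBlk d ℓ i - dirD (ψ ℓ) z d i| := by
      intro ℓ
      calc Kg * ((∏ p ∈ Finset.Ico ((ℓ : ℕ) + 1) L, (1 + K p)) * ‖uBlk d ℓ - dirD (ψ ℓ) z d‖)
          = (Kg * ∏ p ∈ Finset.Ico ((ℓ : ℕ) + 1) L, (1 + K p)) *
            ‖uBlk d ℓ - dirD (ψ ℓ) z d‖ := by ring
        _ ≤ β ℓ * ‖uBlk d ℓ - dirD (ψ ℓ) z d‖ :=
            mul_le_mul_of_nonneg_right (hT ℓ).le (norm_nonneg _)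
        _ ≤ β ℓ * ∑ i, |uBlk d ℓ i - dirD (ψ ℓ) z d i| :=
            mul_le_mul_of_nonneg_left (hρS ℓ) (hβ ℓ).le
    have hsum : ∑ ℓ : Fin L,
        Kg * ((∏ p ∈ Finset.Ico ((ℓ : ℕ) + 1) L, (1 + K p)) * ‖uBlk d ℓ - dirD (ψ ℓ) z d‖) ≤
        ∑ ℓ : Fin L, β ℓ * ∑ i, |uBlk d ℓ i - dirD (ψ ℓ) z d i| :=
      Finset.sum_le_sum fun ℓ _ => hterm ℓ
    have hKB2 : Kg * ‖uOf (d - dh)‖ ≤ ∑ ℓ : Fin L,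
        Kg * ((∏ p ∈ Finset.Ico ((ℓ : ℕ) + 1) L, (1 + K p)) *
          ‖uBlk d ℓ - dirD (ψ ℓ) z d‖) := by
      calc Kg * ‖uOf (d - dh)‖
          ≤ Kg * ∑ ℓ : Fin L, (∏ p ∈ Finset.Ico ((ℓ : ℕ) + 1) L, (1 + K p)) *
            ‖uBlk d ℓ - dirD (ψ ℓ) z d‖ := mul_le_mul_of_nonneg_left hKB hKg.le
        _ = _ := Finset.mul_sum _ _ _
    have hinner_eq : (inner ℝ (thOf z) (thOf dh) : ℝ) = (inner ℝ (thOf z) (thOf d) : ℝ) := by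
      rw [hdth]
    rw [hinner_eq] at hstin
    have habs := abs_le.mp hgd
    linarith [habs.1, habs.2, hsum, hKB2, hstin]

  · intro hstat
    have hzF : z ∈ Feas ψ := by
      by_contra hcon
      have hne : ∃ ℓ₀ : Fin L, uBlk z ℓ₀ ≠ ψ ℓ₀ z := by
        by_contra h'
        push_neg at h'
        exact hcon fun ℓ => h' ℓ
      obtain ⟨ℓ₀, hℓ₀⟩ := hne
      have hΦdep : ∀ ℓ : Fin L, ∀ e e' : ZSp n L N, thOf e = thOf e' →
          (∀ j : Fin L, j < ℓ → uBlk e j = uBlk e' j) →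
          (fun (ℓ : Fin L) (e : ZSp n L N) => dirD (ψ ℓ) z e - (uBlk z ℓ - ψ ℓ z)) ℓ e =
          (fun (ℓ : Fin L) (e : ZSp n L N) => dirD (ψ ℓ) z e - (uBlk z ℓ - ψ ℓ z)) ℓ e' := by
        intro ℓ e e' hth hblk
        simp only
        rw [dirD_psi_congr hdep hψdd z ℓ hth hblk]
      obtain ⟨hvth, hvblk⟩ := gmap_iter_fix (0 : TSp n)
        (fun (ℓ : Fin L) (e : ZSp n L N) => dirD (ψ ℓ) z e - (uBlk z ℓ - ψ ℓ z))
        hΦdep (0 : ZSp n L N) thOf_zero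
      set v := (gmap (0 : TSp n)
        (fun (ℓ : Fin L) (e : ZSp n L N) => dirD (ψ ℓ) z e - (uBlk z ℓ - ψ ℓ z)))^[L]
        (0 : ZSp n L N) with hv
      have hTv := (th_hasDirDeriv g lam ψ β hgdd hψdd z v).dirD_eq
      have hinner : (inner ℝ (thOf z) (thOf v) : ℝ) = 0 := by rw [hvth, inner_zero_right]
      have hthv0 : thOf v = thOf (0 : ZSp n L N) := by rw [hvth, thOf_zero]
      have hpen : ∀ ℓ : Fin L, ∀ i, absD (uBlk z ℓ i - ψ ℓ z i)
          (uBlk v ℓ i - dirD (ψ ℓ) z v i) = -|uBlk z ℓ i - ψ ℓ z i| := by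
        intro ℓ i
        have hcoord : uBlk v ℓ i = dirD (ψ ℓ) z v i - (uBlk z ℓ i - ψ ℓ z i) := by
          rw [hvblk ℓ]; rfl
        have h1 : uBlk v ℓ i - dirD (ψ ℓ) z v i = -(uBlk z ℓ i - ψ ℓ z i) := by
          rw [hcoord]; ring
        rw [h1, absD_neg_self]
      -- block norm recursion
      have hrec0 : ∀ ℓ : Fin L, (ℓ : ℕ) = 0 → ‖uBlk v ℓ‖ ≤ ‖uBlk z ℓ - ψ ℓ z‖ := by
        intro ℓ hℓ0
        have hd0 : dirD (ψ ℓ) z v = 0 := by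
          rw [dirD_psi_congr hdep hψdd z ℓ hthv0
            (fun j hj => absurd (Fin.lt_def.mp hj) (by omega)), dirD_psi_dir_zero]
        rw [hvblk ℓ, hd0, zero_sub, norm_neg]
      have hrec : ∀ ℓ : Fin L, 1 ≤ (ℓ : ℕ) →
          ‖uBlk v ℓ‖ ≤ ‖uBlk z ℓ - ψ ℓ z‖ + K (ℓ : ℕ) * ∑ p ∈ Finset.range (ℓ : ℕ), bn v p := by
        intro ℓ hℓ1
        have hKnn' : 0 ≤ K (ℓ : ℕ) := hKnn _ hℓ1 ℓ.2
        have h1 : ‖dirD (ψ ℓ) z v‖ ≤ K (ℓ : ℕ) * ‖uLow v ℓ‖ := by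
          have := dirD_psi_diff hε hψdd hLipψ hz ℓ hℓ1 v 0 hthv0
          rwa [dirD_psi_dir_zero, sub_zero, uLow_zero, sub_zero] at this
        have h2 : ‖uLow v ℓ‖ ≤ ∑ p ∈ Finset.range (ℓ : ℕ), bn v p := norm_uLow_le_sum_bn v ℓ
        calc ‖uBlk v ℓ‖ = ‖dirD (ψ ℓ) z v - (uBlk z ℓ - ψ ℓ z)‖ := by rw [hvblk ℓ]
          _ ≤ ‖dirD (ψ ℓ) z v‖ + ‖uBlk z ℓ - ψ ℓ z‖ := norm_sub_le _ _
          _ ≤ K (ℓ : ℕ) * ‖uLow v ℓ‖ + ‖uBlk z ℓ - ψ ℓ z‖ := by linarith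
          _ ≤ ‖uBlk z ℓ - ψ ℓ z‖ + K (ℓ : ℕ) * ∑ p ∈ Finset.range (ℓ : ℕ), bn v p := by
              nlinarith [norm_nonneg (uLow v ℓ)]
      have hKB := key_bound hKnn v (fun ℓ => ‖uBlk z ℓ - ψ ℓ z‖)
        (fun ℓ => norm_nonneg _) hrec0 hrec
      -- bound on g-part
      have hGv : dirD g (uOf z) (uOf v) ≤ Kg * ‖uOf v‖ := by
        have := dirD_g_diff hε hgdd hLipg hz v 0 hthv0
        rw [uOf_zero, dirD_g_dir_zero, sub_zero, sub_zero] at this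
        exact (le_abs_self _).trans this
      -- assemble on dirD Θ z v
      have hstatv := hstat v
      rw [hTv] at hstatv
      have hpensum : ∀ ℓ : Fin L, β ℓ * ∑ i, absD (uBlk z ℓ i - ψ ℓ z i)
          (uBlk v ℓ i - dirD (ψ ℓ) z v i) = -(β ℓ * ∑ i, |uBlk z ℓ i - ψ ℓ z i|) := by
        intro ℓ
        rw [Finset.sum_congr rfl fun i _ => hpen ℓ i, Finset.sum_neg_distrib]
        ring
      rw [Finset.sum_congr rfl fun ℓ _ => hpensum ℓ, Finset.sum_neg_distrib, hinner] at hstatv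
      -- numeric contradiction
      have hρS : ∀ ℓ : Fin L, ‖uBlk z ℓ - ψ ℓ z‖ ≤ ∑ i, |uBlk z ℓ i - ψ ℓ z i| := by
        intro ℓ
        refine (euc_norm_le_sum_abs (uBlk z ℓ - ψ ℓ z)).trans (le_of_eq ?_)
        exact Finset.sum_congr rfl fun i _ => rfl
      have hterm : ∀ ℓ : Fin L,
          Kg * ((∏ p ∈ Finset.Ico ((ℓ : ℕ) + 1) L, (1 + K p)) * ‖uBlk z ℓ - ψ ℓ z‖) ≤
          β ℓ * ∑ i, |uBlk z ℓ i - ψ ℓ z i| := by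
        intro ℓ
        have hc : 0 ≤ Kg * ∏ p ∈ Finset.Ico ((ℓ : ℕ) + 1) L, (1 + K p) :=
          mul_nonneg hKg.le (prod_one_add_nonneg hKnn _)
        calc Kg * ((∏ p ∈ Finset.Ico ((ℓ : ℕ) + 1) L, (1 + K p)) * ‖uBlk z ℓ - ψ ℓ z‖)
            = (Kg * ∏ p ∈ Finset.Ico ((ℓ : ℕ) + 1) L, (1 + K p)) * ‖uBlk z ℓ - ψ ℓ z‖ := by
              ring
          _ ≤ β ℓ * ‖uBlk z ℓ - ψ ℓ z‖ :=
              mul_le_mul_of_nonneg_right (hT ℓ).le (norm_nonneg _)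
          _ ≤ β ℓ * ∑ i, |uBlk z ℓ i - ψ ℓ z i| :=
              mul_le_mul_of_nonneg_left (hρS ℓ) (hβ ℓ).le
      have htermlt : Kg * ((∏ p ∈ Finset.Ico ((ℓ₀ : ℕ) + 1) L, (1 + K p)) *
          ‖uBlk z ℓ₀ - ψ ℓ₀ z‖) < β ℓ₀ * ∑ i, |uBlk z ℓ₀ i - ψ ℓ₀ z i| := by
        have hρpos : 0 < ‖uBlk z ℓ₀ - ψ ℓ₀ z‖ := by
          rw [norm_pos_iff]
          exact sub_ne_zero_of_ne hℓ₀
        calc Kg * ((∏ p ∈ Finset.Ico ((ℓ₀ : ℕ) + 1) L, (1 + K p)) * ‖uBlk z ℓ₀ - ψ ℓ₀ z‖)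
            = (Kg * ∏ p ∈ Finset.Ico ((ℓ₀ : ℕ) + 1) L, (1 + K p)) * ‖uBlk z ℓ₀ - ψ ℓ₀ z‖ := by
              ring
          _ < β ℓ₀ * ‖uBlk z ℓ₀ - ψ ℓ₀ z‖ := mul_lt_mul_of_pos_right (hT ℓ₀) hρpos
          _ ≤ β ℓ₀ * ∑ i, |uBlk z ℓ₀ i - ψ ℓ₀ z i| :=
              mul_le_mul_of_nonneg_left (hρS ℓ₀) (hβ ℓ₀).le
      have hsumlt : ∑ ℓ : Fin L,
          Kg * ((∏ p ∈ Finset.Ico ((ℓ : ℕ) + 1) L, (1 + K p)) * ‖uBlk z ℓ - ψ ℓ z‖) <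
          ∑ ℓ : Fin L, β ℓ * ∑ i, |uBlk z ℓ i - ψ ℓ z i| := by
        refine Finset.sum_lt_sum (fun ℓ _ => hterm ℓ) ⟨ℓ₀, Finset.mem_univ _, htermlt⟩
      have hGv2 : dirD g (uOf z) (uOf v) ≤ ∑ ℓ : Fin L,
          Kg * ((∏ p ∈ Finset.Ico ((ℓ : ℕ) + 1) L, (1 + K p)) * ‖uBlk z ℓ - ψ ℓ z‖) := by
        calc dirD g (uOf z) (uOf v) ≤ Kg * ‖uOf v‖ := hGv
          _ ≤ Kg * ∑ ℓ : Fin L, (∏ p ∈ Finset.Ico ((ℓ : ℕ) + 1) L, (1 + K p)) *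
              ‖uBlk z ℓ - ψ ℓ z‖ := mul_le_mul_of_nonneg_left hKB hKg.le
          _ = _ := Finset.mul_sum _ _ _
      linarith

    refine ⟨hzF, ?_⟩
    intro d hd
    obtain ⟨zs, τs, hzs, hzs_lim, hτpos, hτ0, hquot⟩ := hd
    have htan : ∀ ℓ, uBlk d ℓ = dirD (ψ ℓ) z d := by
      intro ℓ
      have hdd := ddStrong (hψLip ℓ) (hasDirDeriv_dirD (hψdd ℓ z d)) hτpos hτ0 hquot
      have hzrw : ∀ k, z + τs k • ((τs k)⁻¹ • (zs k - z)) = zs k := fun k => by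
        rw [smul_inv_smul₀ (hτpos k).ne', add_sub_cancel]
      have h2 : Tendsto (fun k => uBlk ((τs k)⁻¹ • (zs k - z)) ℓ) atTop
          (𝓝 (dirD (ψ ℓ) z d)) := by
        refine hdd.congr fun k => ?_
        rw [hzrw k, ← hzs k ℓ, ← hzF ℓ]
        rfl
      have h3 : Tendsto (fun k => uBlk ((τs k)⁻¹ • (zs k - z)) ℓ) atTop (𝓝 (uBlk d ℓ)) := by
        rw [tendsto_euc_iff]
        intro i
        exact (tendsto_euc_iff.mp hquot (Sum.inr ⟨ℓ, i⟩))
      exact tendsto_nhds_unique h3 h2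
    have hFd := (fobj_hasDirDeriv g lam hgdd z d).dirD_eq
    have hTd := (th_hasDirDeriv g lam ψ β hgdd hψdd z d).dirD_eq
    have hpen : ∀ ℓ : Fin L, (β ℓ * ∑ i, absD (uBlk z ℓ i - ψ ℓ z i)
        (uBlk d ℓ i - dirD (ψ ℓ) z d i)) = 0 := by
      intro ℓ
      have h1 : ∀ i, uBlk z ℓ i - ψ ℓ z i = 0 := fun i => by rw [hzF ℓ, sub_self]
      have h2 : ∀ i, uBlk d ℓ i - dirD (ψ ℓ) z d i = 0 := fun i => by
        rw [htan ℓ, sub_self]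
      have : ∀ i, absD (uBlk z ℓ i - ψ ℓ z i) (uBlk d ℓ i - dirD (ψ ℓ) z d i) = 0 :=
        fun i => by rw [h1 i, h2 i, absD_zero_left, abs_zero]
      rw [Finset.sum_congr rfl fun i _ => this i]
      simp
    have hstatd := hstat d
    rw [hTd, Finset.sum_congr rfl fun ℓ _ => hpen ℓ] at hstatd
    simp only [Finset.sum_const_zero, add_zero] at hstatd
    rw [hFd]
    exact hstatd
end
end

section
/- Under Assumptions A1 and A2, for every z = (θ,u₁,…,u_L) ∈ F₀ and every direction d = (d_θ,d_{u₁},…,d_{u_L}) in the radial cone P_{F₀}(z), the second-order directional derivatives of the constraint functions vanish: ψ^{(2)}_{ℓ-1}(θ,u₁,…,u_{ℓ-1}; d_θ,d_{u₁},…,d_{u_{ℓ-1}}) = 0 for every ℓ = 1,…,L. -/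
open Filter Topology

noncomputable section

/-- Equation (3.15): under Assumptions A1 and A2, the second-order directional derivatives of
the constraint functions vanish along radial directions of `F₀`. -/
theorem stmt14
    {n L : ℕ} (hn : 0 < n) (hL : 0 < L) {N : Fin L → ℕ} (hN : ∀ ℓ, 0 < N ℓ)
    (ψ : (ℓ : Fin L) → ZSp n L N → EuclideanSpace ℝ (Fin (N ℓ)))
    (hdep : DepBelow ψ)
    -- Assumption A1
    (hψLip : ∀ ℓ, LocallyLipschitz (ψ ℓ))
    -- Assumption A2 (first- and second-order directional derivatives `ψd`, `ψd2`)
    (ψd : (ℓ : Fin L) → ZSp n L N → ZSp n L N → EuclideanSpace ℝ (Fin (N ℓ)))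
    (ψd2 : (ℓ : Fin L) → ZSp n L N → ZSp n L N → EuclideanSpace ℝ (Fin (N ℓ)))
    (hψd2 : ∀ ℓ z d, HasDirDeriv2 (ψ ℓ) z d (ψd ℓ z d) (ψd2 ℓ z d)) :
    ∀ z ∈ Feas ψ, ∀ d ∈ radialCone (Feas ψ) z, ∀ ℓ, ψd2 ℓ z d = 0 := by
  intro z hz d hd ℓ
  obtain ⟨τ, hτpos, hτ0, hmem⟩ := hd
  have hτ : Tendsto τ atTop (𝓝[>] (0 : ℝ)) :=
    tendsto_nhdsWithin_of_tendsto_nhds_of_eventually_within _ hτ0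
      (Eventually.of_forall fun k => hτpos k)
  obtain ⟨h1, h2⟩ := hψd2 ℓ z d
  have key : ∀ k, ψ ℓ (z + τ k • d) - ψ ℓ z = τ k • uBlk d ℓ := by
    intro k
    have hf := hmem k ℓ
    have hb : uBlk (z + τ k • d) ℓ = uBlk z ℓ + τ k • uBlk d ℓ := by
      ext i; rfl
    rw [← hf, hb, hz ℓ]
    abel
  -- first derivative equals uBlk d ℓ
  have hfst : ψd ℓ z d = uBlk d ℓ := by
    have hc : Tendsto (fun k => (τ k)⁻¹ • (ψ ℓ (z + τ k • d) - ψ ℓ z)) atTop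
        (𝓝 (ψd ℓ z d)) := h1.comp hτ
    have heq : (fun k => (τ k)⁻¹ • (ψ ℓ (z + τ k • d) - ψ ℓ z)) =
        fun _ => uBlk d ℓ := by
      funext k
      rw [key k, smul_smul, inv_mul_cancel₀ (hτpos k).ne', one_smul]
    rw [heq] at hc
    exact tendsto_nhds_unique hc tendsto_const_nhds
  -- second derivative equals 0
  have hc2 : Tendsto
      (fun k => ((τ k) ^ 2 / 2)⁻¹ • (ψ ℓ (z + τ k • d) - ψ ℓ z - τ k • ψd ℓ z d))
      atTop (𝓝 (ψd2 ℓ z d)) := h2.comp hτ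
  have heq2 : (fun k => ((τ k) ^ 2 / 2)⁻¹ •
      (ψ ℓ (z + τ k • d) - ψ ℓ z - τ k • ψd ℓ z d)) = fun _ => (0 : _) := by
    funext k
    rw [hfst, key k, sub_self, smul_zero]
  rw [heq2] at hc2
  exact tendsto_nhds_unique hc2 tendsto_const_nhds
end
end
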